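/- arXiv:2102.06387 — 7 statements merged into one kernel-verified Lean document; each statement's English description precedes it below -/
import Mathlib

section
/- For any r > 0, any x ∈ ℝ, and any t ≥ log 2, the modular clipping error satisfies |M_{[-r,r]}(x) − x| ≤ 2r·(exp((t/2)·(x/r − 1)) + exp((t/2)·(−x/r − 1))). -/
/-- Modular clipping error bound (Lemma: |M_{[-r,r]}(x) − x| ≤ 2r(e^{(t/2)(x/r−1)} + e^{(t/2)(−x/r−1)})).
`y` is any valid value of the modular clipping `M_{[-r,r]}(x)`, i.e. `y ∈ [-r,r]` and
`y = x + 2r·n` for some integer `n`. -/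
theorem modular_clipping_abs_error (r x t y : ℝ) (hr : 0 < r) (ht : Real.log 2 ≤ t)
    (hy : y ∈ Set.Icc (-r) r) (hmod : ∃ n : ℤ, y = x + 2 * r * n) :
    |y - x| ≤ 2 * r * (Real.exp (t / 2 * (x / r - 1)) + Real.exp (t / 2 * (-x / r - 1))) := by
  obtain ⟨n, hn⟩ := hmod
  obtain ⟨hy1, hy2⟩ := hy
  have hlog2 : (0:ℝ) < Real.log 2 := Real.log_pos one_lt_two
  have hyx : y - x = 2 * r * n := by rw [hn]; ring
  rcases eq_or_ne n 0 with h0 | h0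
  · rw [hyx, h0]
    simp
    positivity
  · set k : ℕ := n.natAbs with hk
    have hk1 : 1 ≤ k := Int.natAbs_pos.mpr h0
    have hnk : |(n:ℝ)| = (k:ℝ) := by
      rw [hk, Nat.cast_natAbs, Int.cast_abs]
    have habs : |y - x| = 2 * r * k := by
      rw [hyx, abs_mul, abs_of_pos (by linarith), hnk]
    have hxabs : 2 * r * k - r ≤ |x| := by
      have h1 : |2 * r * (n:ℝ)| ≤ |x| + |y| := by
        calc |2 * r * (n:ℝ)| = |y - x| := by rw [hyx]
          _ ≤ |y| + |x| := abs_sub _ _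
          _ = |x| + |y| := by ring
      have h2 : |y| ≤ r := abs_le.mpr ⟨hy1, hy2⟩
      have h3 : |2 * r * (n:ℝ)| = 2 * r * k := by
        rw [abs_mul, abs_of_pos (by linarith), hnk]
      linarith
    have hkey : (k:ℝ) ≤ Real.exp (t / 2 * (|x| / r - 1)) := by
      have hpow : (k:ℝ) ≤ 2 ^ (k - 1) := by
        have := Nat.lt_two_pow_self (n := k - 1)
        have : k ≤ 2 ^ (k - 1) := by omega
        exact_mod_cast this
      have hexp : (2:ℝ) ^ (k - 1) = Real.exp ((k - 1 : ℕ) * Real.log 2) := by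
        rw [Real.exp_nat_mul, Real.exp_log two_pos]
      have harg : ((k - 1 : ℕ) : ℝ) * Real.log 2 ≤ t / 2 * (|x| / r - 1) := by
        have hcast : ((k - 1 : ℕ) : ℝ) = (k:ℝ) - 1 := by
          have : (1:ℕ) ≤ k := hk1
          push_cast [Nat.cast_sub this]
          ring
        rw [hcast]
        have hdiv : 2 * (k:ℝ) - 2 ≤ |x| / r - 1 := by
          have h' : 2 * (k:ℝ) - 1 ≤ |x| / r := by
            rw [le_div_iff₀ hr]
            nlinarith
          linarith
        have hk0 : (0:ℝ) ≤ (k:ℝ) - 1 := by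
          have : (1:ℝ) ≤ (k:ℝ) := by exact_mod_cast hk1
          linarith
        have h1 : ((k:ℝ) - 1) * Real.log 2 ≤ ((k:ℝ) - 1) * t :=
          mul_le_mul_of_nonneg_left ht hk0
        have h2 : ((k:ℝ) - 1) * t ≤ t / 2 * (|x| / r - 1) := by
          have ht0 : 0 ≤ t := le_trans hlog2.le ht
          nlinarith [hdiv, ht0]
        linarith
      calc (k:ℝ) ≤ 2 ^ (k - 1) := hpow
        _ = Real.exp ((k - 1 : ℕ) * Real.log 2) := hexp
        _ ≤ Real.exp (t / 2 * (|x| / r - 1)) := Real.exp_le_exp.mpr harg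
    have hsum : Real.exp (t / 2 * (|x| / r - 1)) ≤
        Real.exp (t / 2 * (x / r - 1)) + Real.exp (t / 2 * (-x / r - 1)) := by
      rcases le_or_gt 0 x with hx | hx
      · rw [abs_of_nonneg hx]
        nlinarith [Real.exp_pos (t / 2 * (-x / r - 1))]
      · rw [abs_of_neg hx]
        have : -x / r = -x / r := rfl
        nlinarith [Real.exp_pos (t / 2 * (x / r - 1))]
    rw [habs]
    have := mul_le_mul_of_nonneg_left (le_trans hkey hsum) (by linarith : (0:ℝ) ≤ 2 * r)
    linarith
end

section
/- For any r > 0, any x ∈ ℝ, and any t ≥ log 2, the squared modular clipping error satisfies (M_{[-r,r]}(x) − x)² ≤ 4r²·(exp(t·(x/r − 1)) + exp(t·(−x/r − 1))). -/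
/-- Squared modular clipping error bound.
`y` is any valid value of the modular clipping `M_{[-r,r]}(x)`, i.e. `y ∈ [-r,r]` and
`y = x + 2r·n` for some integer `n`. -/
theorem modular_clipping_sq_error (r x t y : ℝ) (hr : 0 < r) (ht : Real.log 2 ≤ t)
    (hy : y ∈ Set.Icc (-r) r) (hmod : ∃ n : ℤ, y = x + 2 * r * n) :
    (y - x) ^ 2 ≤ 4 * r ^ 2 * (Real.exp (t * (x / r - 1)) + Real.exp (t * (-x / r - 1))) := by
  obtain ⟨n, hn⟩ := hmod
  obtain ⟨hy1, hy2⟩ := hy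
  have ht0 : 0 ≤ t := le_trans (Real.log_nonneg one_le_two) ht
  rcases eq_or_ne n 0 with h0 | h0
  · have hz : (y - x) ^ 2 = 0 := by rw [hn, h0]; push_cast; ring
    rw [hz]; positivity
  · have hna : 1 ≤ n.natAbs := Int.natAbs_pos.mpr h0
    set m : ℕ := n.natAbs - 1 with hm
    have habs : (n.natAbs : ℝ) = m + 1 := by
      have : n.natAbs = m + 1 := (Nat.succ_pred_eq_of_pos hna).symm
      rw [this]; push_cast; ring
    have hyx : y - x = 2 * r * n := by rw [hn]; ring
    have hyabs : |y| ≤ r := abs_le.mpr ⟨hy1, hy2⟩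
    have hxabs : r * (2 * (m + 1 : ℝ) - 1) ≤ |x| := by
      have hx' : x = y - 2 * r * n := by rw [hn]; ring
      have h1 : |2 * r * (n:ℝ)| - |y| ≤ |x| := by
        rw [hx']
        have := abs_sub_abs_le_abs_sub (2 * r * (n:ℝ)) y
        rw [abs_sub_comm] at this
        linarith
      have h2 : |2 * r * (n:ℝ)| = 2 * r * n.natAbs := by
        rw [abs_mul, abs_of_nonneg (by linarith : (0:ℝ) ≤ 2 * r), Nat.cast_natAbs, Int.abs_eq_natAbs]
        push_cast; ring
      rw [h2, habs] at h1
      linarith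
    have hdiv : 2 * (m : ℝ) ≤ |x| / r - 1 := by
      rw [le_sub_iff_add_le, le_div_iff₀ hr]
      nlinarith
    have hexp : ((m:ℝ) + 1) ^ 2 ≤ Real.exp (t * (|x| / r - 1)) := by
      have h1 : Real.log 2 * (2 * m) ≤ t * (|x| / r - 1) := by
        have := Real.log_nonneg (by norm_num : (1:ℝ) ≤ 2)
        have h2m : (0:ℝ) ≤ 2 * m := by positivity
        nlinarith
      calc ((m:ℝ) + 1) ^ 2 ≤ ((2:ℝ) ^ m) ^ 2 := by
            have : (m:ℝ) + 1 ≤ (2:ℝ) ^ m := by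
              have := Nat.lt_two_pow_self (n := m)
              exact_mod_cast Nat.succ_le_of_lt this
            nlinarith [pow_nonneg (by norm_num : (0:ℝ) ≤ 2) m]
        _ = Real.exp (Real.log 2 * (2 * m)) := by
            rw [show Real.log 2 * (2 * (m:ℝ)) = (2 * m : ℕ) * Real.log 2 by push_cast; ring,
              Real.exp_nat_mul, Real.exp_log (by norm_num), mul_comm 2 m, pow_mul]
        _ ≤ _ := Real.exp_le_exp.mpr h1
    have hsum : Real.exp (t * (|x| / r - 1)) ≤
        Real.exp (t * (x / r - 1)) + Real.exp (t * (-x / r - 1)) := by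
      rcases abs_cases x with ⟨h, _⟩ | ⟨h, _⟩
      · rw [h]; nlinarith [Real.exp_pos (t * (-x / r - 1))]
      · rw [h]
        have hx2 : -x / r - 1 = -x / r - 1 := rfl
        nlinarith [Real.exp_pos (t * (x / r - 1))]
    have hn2 : ((n:ℝ)) ^ 2 = ((m:ℝ) + 1) ^ 2 := by
      rw [← habs, Nat.cast_natAbs, ← sq_abs ((n:ℝ))]
      norm_cast
    rw [hyx]
    calc (2 * r * (n:ℝ)) ^ 2 = 4 * r ^ 2 * ((n:ℝ)) ^ 2 := by ring
      _ ≤ 4 * r ^ 2 * (Real.exp (t * (x / r - 1)) + Real.exp (t * (-x / r - 1))) := by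
          rw [hn2]
          have := le_trans hexp hsum
          nlinarith [sq_nonneg r]
end

section
/- Let σ, τ ≥ 1/2. Let X and Y be independent discrete Gaussians N_ℤ(0,σ²) and N_ℤ(0,τ²), and let Z = X + Y and W ~ N_ℤ(0, σ²+τ²). Then sup_{z∈ℤ} |log(P[Z=z]/P[W=z])| ≤ 5·exp(−2π²/(1/σ² + 1/τ²)). -/
open Real
namespace DGAux

lemma exp_sq_le_pow {q : ℝ} (hq : 0 < q) (n : ℕ) :
    Real.exp (-q * ((n:ℝ))^2) ≤ Real.exp (-q) ^ n := by
  rw [← Real.exp_nat_mul]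
  apply Real.exp_le_exp.mpr
  have h0 : (0:ℝ) ≤ (n:ℝ) := Nat.cast_nonneg n
  have h1 : (n:ℝ) ≤ (n:ℝ)^2 := by exact_mod_cast Nat.le_self_pow (by norm_num) n
  nlinarith [mul_le_mul_of_nonneg_left h1 hq.le]

lemma summable_exp_sq {q : ℝ} (hq : 0 < q) : Summable fun k : ℤ => Real.exp (-q * (k:ℝ)^2) := by
  have hr : Real.exp (-q) < 1 := exp_lt_one_iff.mpr (by linarith)
  have hg : Summable fun n : ℕ => Real.exp (-q) ^ n := summable_geometric_of_lt_one (exp_pos _).le hr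
  apply Summable.of_nat_of_neg_add_one
  · exact hg.of_nonneg_of_le (fun n => (exp_pos _).le) (fun n => by exact_mod_cast exp_sq_le_pow hq n)
  · refine hg.of_nonneg_of_le (fun n => (exp_pos _).le) (fun n => ?_)
    have : ((-(n+1) : ℤ) : ℝ)^2 = ((n+1 : ℕ) : ℝ)^2 := by push_cast; ring
    rw [this]
    calc Real.exp (-q * ((n+1:ℕ):ℝ)^2) ≤ Real.exp (-q) ^ (n+1 : ℕ) := exp_sq_le_pow hq (n+1)
      _ ≤ Real.exp (-q) ^ n := pow_le_pow_of_le_one (exp_pos _).le hr.le (Nat.le_succ n)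

lemma summable_E {q : ℝ} (hq : 0 < q) (c : ℝ) :
    Summable fun k : ℤ => Real.exp (-q * (k:ℝ)^2) * Real.cos (c * k) := by
  apply Summable.of_norm
  refine (summable_exp_sq hq).of_nonneg_of_le (fun n => norm_nonneg _) (fun n => ?_)
  rw [norm_mul, norm_of_nonneg (exp_pos _).le]
  calc Real.exp (-q * (n:ℝ)^2) * ‖Real.cos (c * n)‖ ≤ Real.exp (-q * (n:ℝ)^2) * 1 := by
        apply mul_le_mul_of_nonneg_left _ (exp_pos _).le
        rw [Real.norm_eq_abs]; exact abs_cos_le_one _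
    _ = _ := mul_one _


noncomputable def E (q c : ℝ) : ℝ := ∑' k : ℤ, Real.exp (-q * (k:ℝ)^2) * Real.cos (c * k)

lemma geom_tail {r : ℝ} (h0 : 0 ≤ r) (h1 : r < 1) :
    (∑' k : ℤ, (if k = 0 then 0 else r ^ k.natAbs)) = 2 * r / (1 - r) := by
  set g : ℤ → ℝ := fun k => if k = 0 then 0 else r ^ k.natAbs with hg_def
  have hg : Summable fun n : ℕ => r ^ n := summable_geometric_of_lt_one h0 h1
  have hsucc : Summable fun n : ℕ => r ^ (n + 1) := by
    simpa [pow_succ, mul_comm] using hg.mul_left r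
  have hpnat : ∀ n : ℕ, g (n : ℤ) = if n = 0 then 0 else r ^ n := by
    intro n
    simp only [hg_def]
    by_cases h : n = 0
    · simp [h]
    · rw [if_neg (by exact_mod_cast h), if_neg h, show ((n:ℤ)).natAbs = n from rfl]
  have hnnat : ∀ n : ℕ, g (-(n + 1) : ℤ) = r ^ (n + 1) := by
    intro n
    simp only [hg_def]
    rw [if_neg (by omega), show ((-(n+1):ℤ)).natAbs = n + 1 by omega]
  have hpos : Summable fun n : ℕ => g (n : ℤ) := by
    refine hg.of_nonneg_of_le (fun n => ?_) (fun n => ?_) <;> rw [hpnat]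
    · split <;> positivity
    · split
      · positivity
      · exact le_refl _
  have hneg : Summable fun n : ℕ => g (-(n + 1) : ℤ) := hsucc.congr (fun n => (hnnat n).symm)
  rw [tsum_of_nat_of_neg_add_one hpos hneg]
  have e1 : (∑' n : ℕ, g (n : ℤ)) = r / (1 - r) := by
    rw [Summable.tsum_eq_zero_add hpos, hpnat 0, if_pos rfl, zero_add]
    have : ∀ n : ℕ, g ((n + 1 : ℕ) : ℤ) = r * r ^ n := by
      intro n; rw [hpnat, if_neg (Nat.succ_ne_zero n), pow_succ, mul_comm]
    rw [tsum_congr this, tsum_mul_left, tsum_geometric_of_lt_one h0 h1]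
    field_simp
  have e2 : (∑' n : ℕ, g (-(n + 1) : ℤ)) = r / (1 - r) := by
    have : ∀ n : ℕ, g (-(n + 1) : ℤ) = r * r ^ n := by
      intro n; rw [hnnat, pow_succ, mul_comm]
    rw [tsum_congr this, tsum_mul_left, tsum_geometric_of_lt_one h0 h1]
    field_simp
  rw [e1, e2]; ring

lemma summable_geom_tail {r : ℝ} (h0 : 0 ≤ r) (h1 : r < 1) :
    Summable (fun k : ℤ => if k = 0 then (0:ℝ) else r ^ k.natAbs) := by
  have hg : Summable fun n : ℕ => r ^ n := summable_geometric_of_lt_one h0 h1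
  have hsucc : Summable fun n : ℕ => r ^ (n + 1) := by
    simpa [pow_succ, mul_comm] using hg.mul_left r
  apply Summable.of_nat_of_neg_add_one
  · refine hg.of_nonneg_of_le (fun n => ?_) (fun n => ?_)
    · split <;> positivity
    · split
      · positivity
      · exact le_of_eq (by norm_num)
  · refine hsucc.congr (fun n => ?_)
    rw [if_neg (by omega), show ((-(n+1):ℤ)).natAbs = n + 1 by omega]

lemma E_sub_one_abs {q : ℝ} (hq : 0 < q) (c : ℝ) :
    |E q c - 1| ≤ 2 * Real.exp (-q) / (1 - Real.exp (-q)) := by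
  have hr0 : (0:ℝ) ≤ Real.exp (-q) := (exp_pos _).le
  have hr1 : Real.exp (-q) < 1 := exp_lt_one_iff.mpr (by linarith)
  have hsum := summable_E hq c
  have h0 : Real.exp (-q * ((0:ℤ):ℝ)^2) * Real.cos (c * (0:ℤ)) = 1 := by norm_num
  rw [E, Summable.tsum_eq_add_tsum_ite hsum 0, h0, add_sub_cancel_left]
  have hsq : ∀ k : ℤ, ((k:ℝ))^2 = ((k.natAbs : ℝ))^2 := by
    intro k; rw [Nat.cast_natAbs, Int.cast_abs, sq_abs]
  set f : ℤ → ℝ := fun k => if k = 0 then (0:ℝ) else Real.exp (-q * (k:ℝ)^2) * Real.cos (c * k)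
    with hf_def
  set g : ℤ → ℝ := fun k => if k = 0 then (0:ℝ) else Real.exp (-q) ^ k.natAbs with hg_def
  have hbound : ∀ k : ℤ, |f k| ≤ g k := by
    intro k
    simp only [hf_def, hg_def]
    split
    · simp
    · rw [abs_mul, abs_of_nonneg (exp_pos _).le]
      have h1 : Real.exp (-q * (k:ℝ)^2) * |Real.cos (c * k)| ≤ Real.exp (-q * (k:ℝ)^2) * 1 :=
        mul_le_mul_of_nonneg_left (abs_cos_le_one _) (exp_pos _).le
      rw [mul_one] at h1
      refine h1.trans ?_
      rw [hsq k]
      exact exp_sq_le_pow hq _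
  have hmaj : Summable g := summable_geom_tail hr0 hr1
  have habs : Summable fun k : ℤ => |f k| :=
    hmaj.of_nonneg_of_le (fun k => abs_nonneg _) hbound
  have hnorm : Summable fun k : ℤ => ‖f k‖ := habs.congr (fun k => (Real.norm_eq_abs (f k)).symm)
  calc |∑' k : ℤ, f k| ≤ ∑' k : ℤ, |f k| := by
        have h := norm_tsum_le_tsum_norm hnorm
        simp only [Real.norm_eq_abs] at h
        exact h
    _ ≤ ∑' k : ℤ, g k := Summable.tsum_le_tsum hbound habs hmaj
    _ = 2 * Real.exp (-q) / (1 - Real.exp (-q)) := geom_tail hr0 hr1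

lemma one_le_E_zero {q : ℝ} (hq : 0 < q) : 1 ≤ E q 0 := by
  have hsum := summable_E hq 0
  have h0 : Real.exp (-q * ((0:ℤ):ℝ)^2) * Real.cos (0 * (0:ℤ)) = 1 := by norm_num
  rw [E, Summable.tsum_eq_add_tsum_ite hsum 0, h0]
  have : 0 ≤ ∑' k : ℤ, (if k = 0 then (0:ℝ) else Real.exp (-q * (k:ℝ)^2) * Real.cos (0 * k)) := by
    apply tsum_nonneg
    intro k
    split
    · exact le_refl _
    · simp only [zero_mul, Real.cos_zero, mul_one]
      positivity
  linarith

lemma poisson {v : ℝ} (hv : 0 < v) (μ : ℝ) :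
    (∑' x : ℤ, Real.exp (-((x:ℝ) - μ)^2 / (2*v))) =
      Real.sqrt (2*π*v) * E (2*π^2*v) (2*π*μ) := by
  rw [E]
  have hπ : (0:ℝ) < π := Real.pi_pos
  have h2πv : (0:ℝ) < 2*π*v := by positivity
  set a : ℂ := ((1/(2*π*v) : ℝ) : ℂ) with ha_def
  set b : ℂ := ((μ/(2*π*v) : ℝ) : ℂ) with hb_def
  have ha : 0 < a.re := by simp [ha_def]; positivity
  have H := Complex.tsum_exp_neg_quadratic ha b
  have ha0 : a ≠ 0 := by
    simp only [ha_def, ne_eq, Complex.ofReal_eq_zero]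
    positivity
  have hv0 : (v:ℂ) ≠ 0 := by exact_mod_cast hv.ne'
  have hπ0 : ((π:ℝ):ℂ) ≠ 0 := by exact_mod_cast hπ.ne'
  -- Step A : LHS as complex sum
  have stepA : (((∑' x : ℤ, Real.exp (-((x:ℝ) - μ)^2 / (2*v))) : ℝ) : ℂ) =
      (∑' n : ℤ, Complex.exp (-π * a * (n:ℂ)^2 + 2*π*b*(n:ℂ))) *
        Complex.exp (((-(μ^2/(2*v)) : ℝ) : ℂ)) := by
    rw [Complex.ofReal_tsum, ← tsum_mul_right]
    refine tsum_congr (fun n => ?_)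
    rw [← Complex.exp_add, Complex.ofReal_exp]
    congr 1
    have hreal : (-(((n:ℝ))-μ)^2/(2*v)) =
        -π*(1/(2*π*v))*((n:ℝ))^2 + 2*π*(μ/(2*π*v))*((n:ℝ)) + (-(μ^2/(2*v))) := by
      field_simp
      ring
    rw [ha_def, hb_def]
    push_cast
    have h2 := congrArg (fun t : ℝ => (t:ℂ)) hreal
    push_cast at h2
    linear_combination h2
  -- Step B : RHS sum transform
  have stepB : (∑' n : ℤ, Complex.exp (-π/a * ((n:ℂ) + Complex.I*b)^2)) *
        Complex.exp (((-(μ^2/(2*v)) : ℝ) : ℂ)) =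
      ∑' n : ℤ, Complex.exp (((-(2*π^2*v) * (n:ℝ)^2 : ℝ) : ℂ) + ((-(2*π*μ) * (n:ℝ) : ℝ):ℂ) * Complex.I) := by
    rw [← tsum_mul_right]
    refine tsum_congr (fun n => ?_)
    rw [← Complex.exp_add]
    congr 1
    push_cast [ha_def, hb_def]
    field_simp [hπ0, hv0]
    ring_nf
    rw [Complex.I_sq]
    ring_nf
  -- Step C : prefactor
  have stepC : 1/a^((1:ℂ)/2) = ((Real.sqrt (2*π*v) : ℝ) : ℂ) := by
    rw [ha_def]
    rw [show ((1:ℂ)/2) = (((1/2 : ℝ)):ℂ) by norm_num]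
    rw [← Complex.ofReal_cpow (by positivity)]
    rw [← Complex.ofReal_one, ← Complex.ofReal_div]
    congr 1
    rw [show (1:ℝ)/(2*π*v) = (2*π*v)⁻¹ from one_div _, Real.inv_rpow h2πv.le, one_div, inv_inv,
      ← Real.sqrt_eq_rpow]
  have hsumC : Summable fun n : ℤ =>
      Complex.exp (((-(2*π^2*v) * (n:ℝ)^2 : ℝ) : ℂ) + ((-(2*π*μ) * (n:ℝ) : ℝ):ℂ) * Complex.I) := by
    apply Summable.of_norm
    have hq : (0:ℝ) < 2*π^2*v := by positivity
    refine (summable_exp_sq hq).congr (fun n => ?_)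
    rw [Complex.norm_exp]
    congr 1
    simp only [Complex.add_re, Complex.add_im, Complex.ofReal_re, Complex.ofReal_im, Complex.mul_re, Complex.mul_im, Complex.I_re, Complex.I_im]; ring
  have key : (((∑' x : ℤ, Real.exp (-((x:ℝ) - μ)^2 / (2*v))) : ℝ) : ℂ) =
      ((Real.sqrt (2*π*v) : ℝ) : ℂ) *
        ∑' n : ℤ, Complex.exp (((-(2*π^2*v) * (n:ℝ)^2 : ℝ) : ℂ) + ((-(2*π*μ) * (n:ℝ) : ℝ):ℂ) * Complex.I) := by
    rw [stepA, H, stepC, mul_assoc, stepB]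
  have := congrArg Complex.re key
  rw [Complex.ofReal_re, Complex.re_ofReal_mul, Complex.re_tsum hsumC] at this
  rw [this]
  congr 1
  refine tsum_congr (fun n => ?_)
  have hre : (((-(2*π^2*v) * (n:ℝ)^2 : ℝ) : ℂ) + ((-(2*π*μ) * (n:ℝ) : ℝ):ℂ) * Complex.I).re
      = -(2*π^2*v) * (n:ℝ)^2 := by simp only [Complex.add_re, Complex.add_im, Complex.ofReal_re, Complex.ofReal_im, Complex.mul_re, Complex.mul_im, Complex.I_re, Complex.I_im]; ring
  have him : (((-(2*π^2*v) * (n:ℝ)^2 : ℝ) : ℂ) + ((-(2*π*μ) * (n:ℝ) : ℝ):ℂ) * Complex.I).im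
      = -(2*π*μ) * (n:ℝ) := by simp only [Complex.add_re, Complex.add_im, Complex.ofReal_re, Complex.ofReal_im, Complex.mul_re, Complex.mul_im, Complex.I_re, Complex.I_im]; ring
  rw [Complex.exp_re, hre, him, show -(2*π*μ) * (n:ℝ) = -((2*π*μ) * (n:ℝ)) by ring, Real.cos_neg]



lemma sum_eq (v : ℝ) (hv : 0 < v) :
    (∑' y : ℤ, Real.exp (-(y:ℝ)^2 / (2*v))) = Real.sqrt (2*π*v) * E (2*π^2*v) 0 := by
  have h := poisson hv (0:ℝ)
  rw [mul_zero] at h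
  rw [← h]
  exact tsum_congr (fun n => by ring_nf)

lemma E_pos_facts {q : ℝ} (hq : 0 < q) (c : ℝ) {d : ℝ} (hd : 2 * Real.exp (-q) / (1 - Real.exp (-q)) ≤ d)
    (hd1 : d < 1) : 0 < E q c ∧ 1 - d ≤ E q c ∧ E q c ≤ 1 + d := by
  have h := E_sub_one_abs hq c
  have h2 := abs_le.mp (h.trans hd)
  refine ⟨by linarith [h2.1], by linarith [h2.1], by linarith [h2.2]⟩

lemma numeric : Real.exp (-(π^2/4)) ≤ 0.087 := by
  have h4 : (11.5:ℝ) ≤ Real.exp 2.46 := by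
    have e1 : Real.exp 2.46 = Real.exp 1 * Real.exp 1 * (Real.exp 0.0575)^8 := by
      rw [← Real.exp_nat_mul, ← Real.exp_add, ← Real.exp_add]; norm_num
    rw [e1]
    have he := Real.exp_one_gt_d9
    have h0575 : (1.0575:ℝ) ≤ Real.exp 0.0575 := by
      have := Real.add_one_le_exp (0.0575:ℝ); linarith
    have hp8 : (1.0575:ℝ)^8 ≤ (Real.exp 0.0575)^8 := by
      gcongr
    have h8 : (1.564:ℝ) ≤ (Real.exp 0.0575)^8 := le_trans (by norm_num) hp8
    nlinarith [Real.exp_pos (1:ℝ)]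
  have h5 : Real.exp (-(π^2/4)) ≤ Real.exp (-2.46) := by
    apply Real.exp_le_exp.mpr
    nlinarith [Real.pi_gt_d6]
  have h6 : Real.exp (-2.46) ≤ 0.087 := by
    rw [Real.exp_neg]
    rw [inv_le_iff_one_le_mul₀ (Real.exp_pos _)]
    nlinarith
  linarith

set_option maxHeartbeats 2000000 in
lemma final_bound {ER ES EA EB u xA xB xS P : ℝ}
    (hu0 : 0 < u) (hxA0 : 0 < xA) (hxB0 : 0 < xB) (hxS0 : 0 < xS) (hP0 : 0 < P)
    (hP : P ≤ 0.087) (huP : u ≤ P) (hxAP : xA ≤ P^2) (hxBP : xB ≤ P^2)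
    (hxAB : xA + xB ≤ u*(1+P)) (hxSu : xS ≤ u*P^3)
    (hER : |ER - 1| ≤ 2*u/(1-u))
    (hEA : |EA - 1| ≤ 2*xA/(1-xA)) (hEB : |EB - 1| ≤ 2*xB/(1-xB))
    (hES : |ES - 1| ≤ 2*xS/(1-xS))
    (hEA1 : 1 ≤ EA) (hEB1 : 1 ≤ EB) (hES1 : 1 ≤ ES) :
    |Real.log ((ER*ES)/(EA*EB))| ≤ 5*u := by
  have hu087 : u ≤ 0.087 := huP.trans hP
  have hP2 : P^2 ≤ 0.007569 := by nlinarith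
  have hP3 : P^3 ≤ 0.00066 := by nlinarith
  have hxA1 : xA ≤ 0.007569 := hxAP.trans hP2
  have hxB1 : xB ≤ 0.007569 := hxBP.trans hP2
  have hxS1 : xS ≤ 0.00066 := by nlinarith
  -- δR ≤ 2.2 u
  have hδR : |ER - 1| ≤ 2.2*u := by
    refine hER.trans ?_
    rw [div_le_iff₀ (by linarith)]
    nlinarith
  have hER_ab := abs_le.mp hδR
  have hER08 : 0.8 ≤ ER := by nlinarith [hER_ab.1]
  have hERpos : 0 < ER := by linarith
  -- log ER bounds
  have a1 : Real.log ER ≤ 2.2*u := by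
    have := Real.log_le_sub_one_of_pos hERpos
    linarith [hER_ab.2]
  have a2 : -Real.log ER ≤ 2.75*u := by
    have hinv : Real.log ER⁻¹ ≤ ER⁻¹ - 1 := Real.log_le_sub_one_of_pos (by positivity)
    rw [Real.log_inv] at hinv
    have h3 : ER⁻¹ - 1 = (1 - ER)/ER := by field_simp
    rw [h3] at hinv
    refine hinv.trans ?_
    rw [div_le_iff₀ hERpos]
    have hm : 2.75*u*0.8 ≤ 2.75*u*ER :=
      mul_le_mul_of_nonneg_left hER08 (by positivity)
    linarith [hER_ab.1]
  -- log EA, EB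
  have dA : 2*xA/(1-xA) ≤ 2.02*xA := by
    rw [div_le_iff₀ (by linarith)]
    linarith [mul_le_mul_of_nonneg_left hxA1 hxA0.le]
  have dB : 2*xB/(1-xB) ≤ 2.02*xB := by
    rw [div_le_iff₀ (by linarith)]
    linarith [mul_le_mul_of_nonneg_left hxB1 hxB0.le]
  have a3 : Real.log EA ≤ 2.02*xA := by
    have := Real.log_le_sub_one_of_pos (by linarith : (0:ℝ) < EA)
    have h2 := (abs_le.mp hEA).2
    linarith [hEA.trans dA, (abs_le.mp (hEA.trans dA)).2]
  have a4 : Real.log EB ≤ 2.02*xB := by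
    have := Real.log_le_sub_one_of_pos (by linarith : (0:ℝ) < EB)
    linarith [(abs_le.mp (hEB.trans dB)).2]
  have a5 : Real.log ES ≤ 0.002*u := by
    have h1 := Real.log_le_sub_one_of_pos (by linarith : (0:ℝ) < ES)
    have dS : 2*xS/(1-xS) ≤ 2.02*xS := by
      rw [div_le_iff₀ (by linarith)]
      linarith [mul_le_mul_of_nonneg_left hxS1 hxS0.le]
    have h2 := (abs_le.mp (hES.trans dS)).2
    nlinarith
  have nA : 0 ≤ Real.log EA := Real.log_nonneg hEA1
  have nB : 0 ≤ Real.log EB := Real.log_nonneg hEB1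
  have nS : 0 ≤ Real.log ES := Real.log_nonneg hES1
  have hsum : Real.log EA + Real.log EB ≤ 2.02*(u*(1+P)) := by linarith
  have hdecomp : Real.log ((ER*ES)/(EA*EB)) =
      Real.log ER + Real.log ES - (Real.log EA + Real.log EB) := by
    rw [Real.log_div (by positivity) (by positivity),
      Real.log_mul hERpos.ne' (by linarith : (0:ℝ) < ES).ne',
      Real.log_mul (by linarith : (0:ℝ) < EA).ne' (by linarith : (0:ℝ) < EB).ne']
  rw [hdecomp]
  rw [abs_le]
  have hm2 : u*P ≤ u*0.087 := mul_le_mul_of_nonneg_left hP hu0.le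
  constructor
  · linarith
  · linarith

lemma ratio_helper {e a b s r ER ES EA EB : ℝ} (he : e ≠ 0) (ha : a ≠ 0) (hb : b ≠ 0)
    (hs : s ≠ 0) (hEA : EA ≠ 0) (hEB : EB ≠ 0) (hrs : r * s = a * b) :
    e * (r * ER) / (a * EA * (b * EB)) / (e / (s * ES)) = ER * ES / (EA * EB) := by
  field_simp
  linear_combination (ER * ES) * hrs

end DGAux



/-- The discrete Gaussian probability mass function on `ℤ` with mean 0 and
variance-parameter `v` (i.e. `N_ℤ(0, v)`). -/
noncomputable def discreteGaussianPMF (v : ℝ) (z : ℤ) : ℝ :=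
  Real.exp (-(z : ℝ) ^ 2 / (2 * v)) / ∑' y : ℤ, Real.exp (-(y : ℝ) ^ 2 / (2 * v))

/-- Convolution of two mass functions on `ℤ`: the law of `X + Y` for independent `X, Y`. -/
noncomputable def convZ (f g : ℤ → ℝ) (z : ℤ) : ℝ := ∑' x : ℤ, f x * g (z - x)

set_option maxHeartbeats 2000000 in
open Real DGAux in
/-- Convolution of two discrete Gaussians: if `X ~ N_ℤ(0,σ²)` and `Y ~ N_ℤ(0,τ²)` are
independent, `Z = X + Y` and `W ~ N_ℤ(0,σ²+τ²)`, then for every `z ∈ ℤ`,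
`|log(P[Z=z]/P[W=z])| ≤ 5·exp(−2π²/(1/σ² + 1/τ²))`. -/
theorem convolution_discrete_gaussians_close (σ τ : ℝ) (hσ : 1 / 2 ≤ σ) (hτ : 1 / 2 ≤ τ)
    (z : ℤ) :
    |Real.log (convZ (discreteGaussianPMF (σ ^ 2)) (discreteGaussianPMF (τ ^ 2)) z /
        discreteGaussianPMF (σ ^ 2 + τ ^ 2) z)| ≤
      5 * Real.exp (-2 * Real.pi ^ 2 / (1 / σ ^ 2 + 1 / τ ^ 2)) := by
  have hσ0 : 0 < σ := by linarith
  have hτ0 : 0 < τ := by linarith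
  set A := σ ^ 2 with hA_def
  set B := τ ^ 2 with hB_def
  have hA0 : 0 < A := by positivity
  have hB0 : 0 < B := by positivity
  have hA4 : 1/4 ≤ A := by rw [hA_def]; nlinarith
  have hB4 : 1/4 ≤ B := by rw [hB_def]; nlinarith
  set S := A + B with hS_def
  have hS0 : 0 < S := by positivity
  set R := A * B / S with hR_def
  have hR0 : 0 < R := by positivity
  set μ := A * (z:ℝ) / S with hμ_def
  have hR8 : 1/8 ≤ R := by rw [hR_def, le_div_iff₀ hS0]; rw [hS_def]; nlinarith
  have hAR : A - R = A^2/S := by rw [hR_def, hS_def]; field_simp; ring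
  have hBR : B - R = B^2/S := by rw [hR_def, hS_def]; field_simp; ring
  have hSR : S - R = (A^2 + A*B + B^2)/S := by rw [hR_def, hS_def]; field_simp; ring
  have hπ : (0:ℝ) < π := Real.pi_pos
  have hexp_eq : -2 * π ^ 2 / (1 / A + 1 / B) = -(2*π^2*R) := by
    rw [hR_def, hS_def]
    have h1 : A ≠ 0 := hA0.ne'
    have h2 : B ≠ 0 := hB0.ne'
    field_simp
    ring
  -- scalar exp bounds
  set P := Real.exp (-(π^2/4)) with hP_def
  have hP0 : 0 < P := Real.exp_pos _
  have hP : P ≤ 0.087 := DGAux.numeric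
  set u := Real.exp (-(2*π^2*R)) with hu_def
  set xA := Real.exp (-(2*π^2*A)) with hxA_def
  set xB := Real.exp (-(2*π^2*B)) with hxB_def
  set xS := Real.exp (-(2*π^2*S)) with hxS_def
  have hu0 : 0 < u := Real.exp_pos _
  have hxA0 : 0 < xA := Real.exp_pos _
  have hxB0 : 0 < xB := Real.exp_pos _
  have hxS0 : 0 < xS := Real.exp_pos _
  have huP : u ≤ P := Real.exp_le_exp.mpr (by
    have := mul_le_mul_of_nonneg_left hR8 (by positivity : (0:ℝ) ≤ 2*π^2)
    linarith)
  have hP2' : P^2 = Real.exp (-(π^2/2)) := by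
    rw [hP_def, sq, ← Real.exp_add]; congr 1; ring
  have hxAP : xA ≤ P^2 := by
    rw [hP2']
    refine Real.exp_le_exp.mpr ?_
    have := mul_le_mul_of_nonneg_left hA4 (by positivity : (0:ℝ) ≤ 2*π^2)
    linarith
  have hxBP : xB ≤ P^2 := by
    rw [hP2']
    refine Real.exp_le_exp.mpr ?_
    have := mul_le_mul_of_nonneg_left hB4 (by positivity : (0:ℝ) ≤ 2*π^2)
    linarith
  have hxAB : xA + xB ≤ u * (1 + P) := by
    have hA_split : xA = u * Real.exp (-(2*π^2*(A^2/S))) := by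
      rw [hxA_def, hu_def, ← Real.exp_add]
      congr 1
      linear_combination (-(2*π^2)) * hAR
    have hB_split : xB = u * Real.exp (-(2*π^2*(B^2/S))) := by
      rw [hxB_def, hu_def, ← Real.exp_add]
      congr 1
      linear_combination (-(2*π^2)) * hBR
    rcases le_total A B with hc | hc
    · have h1 : (1:ℝ)/8 ≤ B^2/S := by
        rw [le_div_iff₀ hS0, hS_def]; nlinarith
      have h2 : Real.exp (-(2*π^2*(B^2/S))) ≤ P := by
        rw [hP_def]
        refine Real.exp_le_exp.mpr ?_
        have := mul_le_mul_of_nonneg_left h1 (by positivity : (0:ℝ) ≤ 2*π^2)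
        linarith
      have h3 : Real.exp (-(2*π^2*(A^2/S))) ≤ 1 := by
        rw [Real.exp_le_one_iff]
        have : (0:ℝ) ≤ 2*π^2*(A^2/S) := by positivity
        linarith
      rw [hA_split, hB_split]
      calc u * Real.exp (-(2*π^2*(A^2/S))) + u * Real.exp (-(2*π^2*(B^2/S)))
          ≤ u * 1 + u * P := add_le_add (mul_le_mul_of_nonneg_left h3 hu0.le)
            (mul_le_mul_of_nonneg_left h2 hu0.le)
        _ = u * (1 + P) := by ring
    · have h1 : (1:ℝ)/8 ≤ A^2/S := by
        rw [le_div_iff₀ hS0, hS_def]; nlinarith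
      have h2 : Real.exp (-(2*π^2*(A^2/S))) ≤ P := by
        rw [hP_def]
        refine Real.exp_le_exp.mpr ?_
        have := mul_le_mul_of_nonneg_left h1 (by positivity : (0:ℝ) ≤ 2*π^2)
        linarith
      have h3 : Real.exp (-(2*π^2*(B^2/S))) ≤ 1 := by
        rw [Real.exp_le_one_iff]
        have : (0:ℝ) ≤ 2*π^2*(B^2/S) := by positivity
        linarith
      rw [hA_split, hB_split]
      calc u * Real.exp (-(2*π^2*(A^2/S))) + u * Real.exp (-(2*π^2*(B^2/S)))
          ≤ u * P + u * 1 := add_le_add (mul_le_mul_of_nonneg_left h2 hu0.le)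
            (mul_le_mul_of_nonneg_left h3 hu0.le)
        _ = u * (1 + P) := by ring
  have hxSu : xS ≤ u * P^3 := by
    have hS_split : xS = u * Real.exp (-(2*π^2*((A^2+A*B+B^2)/S))) := by
      rw [hxS_def, hu_def, ← Real.exp_add]
      congr 1
      linear_combination (-(2*π^2)) * hSR
    have h1 : (3:ℝ)/8 ≤ (A^2+A*B+B^2)/S := by
      rw [le_div_iff₀ hS0, hS_def]; nlinarith [sq_nonneg (A - B)]
    have hP3 : P^3 = Real.exp ((3:ℕ) * -(π^2/4)) := by
      rw [hP_def, ← Real.exp_nat_mul]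
    have h2 : Real.exp (-(2*π^2*((A^2+A*B+B^2)/S))) ≤ P^3 := by
      rw [hP3]
      apply Real.exp_le_exp.mpr
      push_cast
      have := mul_le_mul_of_nonneg_left h1 (by positivity : (0:ℝ) ≤ 2*π^2)
      linarith
    rw [hS_split]
    exact mul_le_mul_of_nonneg_left h2 hu0.le
  -- E abbreviations and facts
  have hqA : (0:ℝ) < 2*π^2*A := by positivity
  have hqB : (0:ℝ) < 2*π^2*B := by positivity
  have hqS : (0:ℝ) < 2*π^2*S := by positivity
  have hqR : (0:ℝ) < 2*π^2*R := by positivity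
  set EA := DGAux.E (2*π^2*A) 0 with hEA_def
  set EB := DGAux.E (2*π^2*B) 0 with hEB_def
  set ES := DGAux.E (2*π^2*S) 0 with hES_def
  set ER := DGAux.E (2*π^2*R) (2*π*μ) with hER_def
  have hEA1 : 1 ≤ EA := DGAux.one_le_E_zero hqA
  have hEB1 : 1 ≤ EB := DGAux.one_le_E_zero hqB
  have hES1 : 1 ≤ ES := DGAux.one_le_E_zero hqS
  have hEA' : |EA - 1| ≤ 2*xA/(1-xA) := DGAux.E_sub_one_abs hqA 0
  have hEB' : |EB - 1| ≤ 2*xB/(1-xB) := DGAux.E_sub_one_abs hqB 0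
  have hES' : |ES - 1| ≤ 2*xS/(1-xS) := DGAux.E_sub_one_abs hqS 0
  have hER' : |ER - 1| ≤ 2*u/(1-u) := DGAux.E_sub_one_abs hqR (2*π*μ)
  have hEA0 : (0:ℝ) < EA := by linarith
  have hEB0 : (0:ℝ) < EB := by linarith
  have hES0 : (0:ℝ) < ES := by linarith
  -- Poisson for the three denominators
  have hSA := DGAux.sum_eq A hA0
  have hSB := DGAux.sum_eq B hB0
  have hSS := DGAux.sum_eq S hS0
  -- completing the square
  have key : ∀ x : ℤ, Real.exp (-(x:ℝ)^2/(2*A)) * Real.exp (-((z - x : ℤ):ℝ)^2/(2*B)) =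
      Real.exp (-(z:ℝ)^2/(2*S)) * Real.exp (-(((x:ℝ) - μ))^2/(2*R)) := by
    intro x
    rw [← Real.exp_add, ← Real.exp_add]
    congr 1
    rw [hμ_def, hR_def, hS_def]
    push_cast
    field_simp
    ring
  have hconv : convZ (discreteGaussianPMF A) (discreteGaussianPMF B) z =
      Real.exp (-(z:ℝ)^2/(2*S)) * (Real.sqrt (2*π*R) * ER) /
        ((∑' y : ℤ, Real.exp (-(y:ℝ)^2 / (2*A))) * (∑' y : ℤ, Real.exp (-(y:ℝ)^2 / (2*B)))) := by
    rw [convZ]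
    have hptwise : ∀ x : ℤ, discreteGaussianPMF A x * discreteGaussianPMF B (z - x) =
        (Real.exp (-(z:ℝ)^2/(2*S)) /
          ((∑' y : ℤ, Real.exp (-(y:ℝ)^2 / (2*A))) * (∑' y : ℤ, Real.exp (-(y:ℝ)^2 / (2*B))))) *
          Real.exp (-(((x:ℝ) - μ))^2/(2*R)) := by
      intro x
      simp only [discreteGaussianPMF]
      rw [div_mul_div_comm, key x]
      ring
    rw [tsum_congr hptwise, tsum_mul_left, DGAux.poisson hR0 μ, hER_def]
    ring
  -- the ratio
  have hsqrt_ne : ∀ v : ℝ, 0 < v → Real.sqrt (2*π*v) ≠ 0 := by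
    intro v hv
    exact (Real.sqrt_pos.mpr (by positivity)).ne'
  have hsqrtprod : Real.sqrt (2*π*R) * Real.sqrt (2*π*S) = Real.sqrt (2*π*A) * Real.sqrt (2*π*B) := by
    rw [← Real.sqrt_mul (by positivity), ← Real.sqrt_mul (by positivity)]
    congr 1
    rw [hR_def]
    field_simp
  have hratio : convZ (discreteGaussianPMF A) (discreteGaussianPMF B) z /
      discreteGaussianPMF S z = (ER*ES)/(EA*EB) := by
    rw [hconv]
    simp only [discreteGaussianPMF]
    rw [hSA, hSB, hSS]
    have hne1 := hsqrt_ne A hA0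
    have hne2 := hsqrt_ne B hB0
    have hne3 := hsqrt_ne S hS0
    have hne4 := hsqrt_ne R hR0
    have hee : Real.exp (-(z:ℝ)^2/(2*S)) ≠ 0 := (Real.exp_pos _).ne'
    exact DGAux.ratio_helper hee hne1 hne2 hne3 hEA0.ne' hEB0.ne' hsqrtprod
  -- conclude
  rw [hratio]
  have hu_eq : Real.exp (-2 * π ^ 2 / (1 / A + 1 / B)) = u := by
    rw [hu_def]
    exact congrArg Real.exp hexp_eq
  rw [hu_eq]
  exact DGAux.final_bound hu0 hxA0 hxB0 hxS0 hP0 hP huP hxAP hxBP hxAB hxSu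
    hER' hEA' hEB' hES' hEA1 hEB1 hES1
end

section
/- Let σ ≥ 1/2 and let X₁,...,Xₙ be i.i.d. discrete Gaussians N_ℤ(0,σ²). Let Zₙ = Σᵢ Xᵢ and Wₙ ~ N_ℤ(0, nσ²). Then sup_{z∈ℤ} |log(P[Zₙ=z]/P[Wₙ=z])| ≤ 5·Σ_{k=1}^{n−1} exp(−2π²σ²·k/(k+1)) ≤ 5(n−1)·exp(−π²σ²). -/
/-- The law of the sum of `n` i.i.d. discrete Gaussians `N_ℤ(0, v)`. -/
noncomputable def sumDiscreteGaussianPMF (v : ℝ) : ℕ → ℤ → ℝ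
  | 0 => fun z => if z = 0 then 1 else 0
  | n + 1 => convZ (sumDiscreteGaussianPMF v n) (discreteGaussianPMF v)


set_option maxHeartbeats 1000000

open Real Complex

noncomputable def Sg (v : ℝ) : ℝ := ∑' y : ℤ, Real.exp (-(y : ℝ) ^ 2 / (2 * v))

lemma summable_nat_gauss (a b : ℝ) (ha : 0 < a) :
    Summable fun n : ℕ => Real.exp (-a * (n : ℝ) ^ 2 + b * n) := by
  refine Summable.of_nonneg_of_le (fun n => (Real.exp_pos _).le) (fun n => ?_)
    (Real.summable_exp_neg_nat.mul_left (Real.exp ((b + 1) ^ 2 / (4 * a))))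
  rw [← Real.exp_add]
  apply Real.exp_le_exp.2
  rw [div_add' _ _ _ (by positivity)]
  rw [le_div_iff₀ (by positivity)]
  nlinarith [sq_nonneg (b + 1 - 2 * a * n)]

lemma summable_int_gauss (a b : ℝ) (ha : 0 < a) :
    Summable fun n : ℤ => Real.exp (-a * (n : ℝ) ^ 2 + b * n) := by
  refine Summable.of_nat_of_neg ?_ ?_
  · simpa using summable_nat_gauss a b ha
  · have := summable_nat_gauss a (-b) ha
    refine this.congr fun n => ?_
    push_cast
    ring_nf

lemma summable_shift (v t : ℝ) (hv : 0 < v) :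
    Summable fun x : ℤ => Real.exp (-((x : ℝ) - t) ^ 2 / (2 * v)) := by
  have := (summable_int_gauss (1 / (2 * v)) (t / v) (by positivity)).mul_left
    (Real.exp (-t ^ 2 / (2 * v)))
  refine this.congr fun n => ?_
  rw [← Real.exp_add]
  congr 1
  field_simp
  ring

lemma poisson_tsum (v t : ℝ) (hv : 0 < v) :
    ∑' x : ℤ, Real.exp (-((x : ℝ) - t) ^ 2 / (2 * v)) =
      Real.sqrt (2 * π * v) *
        ∑' n : ℤ, Real.exp (-(2 * π ^ 2 * v) * (n : ℝ) ^ 2) * Real.cos (2 * π * n * t) := by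
  set a : ℝ := 1 / (2 * π * v) with ha_def
  have hπ := Real.pi_pos
  have ha : 0 < a := by positivity
  set b : ℝ := t * a with hb_def
  have key := Complex.tsum_exp_neg_quadratic (a := (a : ℂ))
    (by simpa using ha) (b : ℂ)
  -- LHS of key is real
  have hL : (∑' n : ℤ, Complex.exp (-(π:ℂ) * (a:ℂ) * (n:ℂ) ^ 2 + 2 * (π:ℂ) * (b:ℂ) * (n:ℂ))) =
      ((∑' n : ℤ, Real.exp (-(π * a) * (n:ℝ) ^ 2 + (2 * π * b) * n) : ℝ) : ℂ) := by
    rw [Complex.ofReal_tsum]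
    refine tsum_congr fun n => ?_
    rw [Complex.ofReal_exp]
    push_cast
    ring_nf
  -- the RHS series
  set f : ℤ → ℂ := fun n => Complex.exp (-(π:ℂ) / (a:ℂ) * ((n:ℂ) + Complex.I * (b:ℂ)) ^ 2) with hf_def
  have hfn : ∀ n : ℤ, f n = ((Real.exp (π * b ^ 2 / a) * Real.exp (-(π / a) * (n:ℝ) ^ 2) : ℝ) : ℂ) *
      Complex.exp (((-(2 * π * b / a * n) : ℝ) : ℂ) * Complex.I) := by
    intro n
    rw [hf_def]
    push_cast
    rw [← Complex.exp_add, ← Complex.exp_add]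
    congr 1
    have haC : (a : ℂ) ≠ 0 := by exact_mod_cast ha.ne'
    field_simp
    ring_nf
    rw [Complex.I_sq]
    ring
  have hsf : Summable f := by
    apply Summable.of_norm
    have : Summable fun n : ℤ => Real.exp (π * b ^ 2 / a) * Real.exp (-(π / a) * (n:ℝ) ^ 2) := by
      have := (summable_int_gauss (π / a) 0 (by positivity)).mul_left (Real.exp (π * b ^ 2 / a))
      simpa using this
    refine this.congr fun n => ?_
    rw [hfn n]
    rw [norm_mul, Complex.norm_real, Real.norm_eq_abs,
      Complex.norm_exp_ofReal_mul_I, mul_one,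
      abs_of_pos (mul_pos (Real.exp_pos _) (Real.exp_pos _))]
  -- conjugation symmetry
  have hconj : ∀ n : ℤ, (starRingEnd ℂ) (f n) = f (-n) := by
    intro n
    have h1 : (((-n : ℤ) : ℝ)) ^ 2 = ((n : ℝ)) ^ 2 := by push_cast; ring
    rw [hfn n, hfn (-n), map_mul, Complex.conj_ofReal, ← Complex.exp_conj, map_mul,
      Complex.conj_ofReal, Complex.conj_I, h1]
    congr 2
    push_cast
    ring
  have hreal : (tsum f) = ((∑' n : ℤ, (f n).re : ℝ) : ℂ) := by
    have hc : (starRingEnd ℂ) (tsum f) = tsum f := by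
      rw [Complex.conj_tsum]
      calc ∑' n : ℤ, (starRingEnd ℂ) (f n) = ∑' n : ℤ, f (-n) := tsum_congr hconj
        _ = tsum f := by
            have := (Equiv.neg ℤ).tsum_eq f
            simpa using this
    rw [← Complex.re_tsum hsf]
    exact (Complex.conj_eq_iff_re.mp hc).symm
  have hre : ∀ n : ℤ, (f n).re =
      Real.exp (π * b ^ 2 / a) * (Real.exp (-(π / a) * (n : ℝ) ^ 2) * Real.cos (2 * π * b / a * n)) := by
    intro n
    rw [hfn n, Complex.re_ofReal_mul, Complex.exp_ofReal_mul_I_re]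
    rw [show -(2 * π * b / a * (n:ℝ)) = -(2 * π * b / a * (n:ℝ)) from rfl, Real.cos_neg]
    ring
  -- the power factor
  have hpow : (1 : ℂ) / (a : ℂ) ^ (1 / 2 : ℂ) = ((Real.sqrt (2 * π * v) : ℝ) : ℂ) := by
    have h1 : ((a ^ (1 / 2 : ℝ) : ℝ) : ℂ) = (a : ℂ) ^ (1 / 2 : ℂ) := by
      rw [Complex.ofReal_cpow ha.le]
      norm_num
    rw [← h1, ← Complex.ofReal_one, ← Complex.ofReal_div]
    congr 1
    rw [← Real.sqrt_eq_rpow, one_div, ← Real.sqrt_inv]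
    congr 1
    rw [ha_def]
    field_simp
  -- assemble
  have hmain : (∑' n : ℤ, Real.exp (-(π * a) * (n:ℝ) ^ 2 + (2 * π * b) * n))
      = Real.sqrt (2 * π * v) * ∑' n : ℤ, (f n).re := by
    have := key
    rw [hL, hpow, hreal, ← Complex.ofReal_mul] at this
    exact_mod_cast this
  have hsplit : ∑' x : ℤ, Real.exp (-((x : ℝ) - t) ^ 2 / (2 * v)) =
      Real.exp (-t ^ 2 / (2 * v)) * ∑' n : ℤ, Real.exp (-(π * a) * (n:ℝ) ^ 2 + (2 * π * b) * n) := by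
    rw [← tsum_mul_left]
    refine tsum_congr fun n => ?_
    rw [← Real.exp_add]
    congr 1
    rw [ha_def, hb_def, ha_def]
    field_simp
    ring
  have hsum2 : ∑' n : ℤ, (f n).re = Real.exp (π * b ^ 2 / a) *
      ∑' n : ℤ, Real.exp (-(2 * π ^ 2 * v) * (n : ℝ) ^ 2) * Real.cos (2 * π * n * t) := by
    rw [← tsum_mul_left]
    refine tsum_congr fun n => ?_
    rw [hre n]
    have h1 : π / a = 2 * π ^ 2 * v := by rw [ha_def]; field_simp
    have h2 : 2 * π * b / a * (n : ℝ) = 2 * π * n * t := by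
      rw [hb_def, ha_def]; field_simp
    rw [h1, h2]
  have h3 : π * b ^ 2 / a = t ^ 2 / (2 * v) := by
    rw [hb_def, ha_def]; field_simp
  rw [hsplit, hmain, hsum2]
  set X := ∑' n : ℤ, Real.exp (-(2 * π ^ 2 * v) * (n : ℝ) ^ 2) * Real.cos (2 * π * n * t) with hX
  have h4 : Real.exp (-t ^ 2 / (2 * v)) * Real.exp (π * b ^ 2 / a) = 1 := by
    rw [h3, ← Real.exp_add]
    rw [show -t ^ 2 / (2 * v) + t ^ 2 / (2 * v) = 0 by ring, Real.exp_zero]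
  linear_combination (Real.sqrt (2 * π * v) * X) * h4

noncomputable def Fser (v t : ℝ) : ℝ :=
  ∑' n : ℤ, Real.exp (-(2 * π ^ 2 * v) * (n : ℝ) ^ 2) * Real.cos (2 * π * n * t)

lemma summable_Fterm (v t : ℝ) (hv : 0 < v) :
    Summable fun n : ℤ => Real.exp (-(2 * π ^ 2 * v) * (n : ℝ) ^ 2) * Real.cos (2 * π * n * t) := by
  have hb : Summable fun n : ℤ => Real.exp (-(2 * π ^ 2 * v) * (n : ℝ) ^ 2) := by
    simpa using summable_int_gauss (2 * π ^ 2 * v) 0 (by positivity)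
  refine Summable.of_norm_bounded hb fun n => ?_
  rw [norm_mul, Real.norm_eq_abs, Real.norm_eq_abs, Real.abs_exp]
  calc Real.exp (-(2 * π ^ 2 * v) * (n : ℝ) ^ 2) * |Real.cos (2 * π * n * t)|
      ≤ Real.exp (-(2 * π ^ 2 * v) * (n : ℝ) ^ 2) * 1 := by
        gcongr; exact abs_cos_le_one _
    _ = _ := mul_one _

section Fbounds
variable (v t : ℝ) (hv : 0 < v)

lemma Fser_bounds (hv : 0 < v) :
    |Fser v t - 1| ≤ 2 * Real.exp (-(2 * π ^ 2 * v)) / (1 - Real.exp (-(2 * π ^ 2 * v)) ^ 3) := by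
  set ε : ℝ := Real.exp (-(2 * π ^ 2 * v)) with hε_def
  have hε0 : 0 < ε := Real.exp_pos _
  have hε1 : ε < 1 := by
    rw [hε_def, Real.exp_lt_one_iff]
    have : 0 < 2 * π ^ 2 * v := by positivity
    linarith
  have hε31 : ε ^ 3 < 1 := pow_lt_one₀ hε0.le hε1 (by norm_num)
  have hgeo : Summable fun n : ℕ => ε * (ε ^ 3) ^ n :=
    (summable_geometric_of_lt_one (by positivity) hε31).mul_left ε
  have hgeosum : ∑' n : ℕ, ε * (ε ^ 3) ^ n = ε / (1 - ε ^ 3) := by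
    rw [tsum_mul_left, tsum_geometric_of_lt_one (by positivity) hε31, div_eq_mul_inv]
  have hpowbd : ∀ n : ℕ, Real.exp (-(2 * π ^ 2 * v) * ((n : ℝ) + 1) ^ 2) ≤ ε * (ε ^ 3) ^ n := by
    intro n
    have h1 : ε * (ε ^ 3) ^ n = Real.exp (-(2 * π ^ 2 * v) * (3 * n + 1)) := by
      rw [hε_def, ← pow_mul, ← pow_succ', ← Real.exp_nat_mul]
      congr 1
      push_cast
      ring
    rw [h1]
    apply Real.exp_le_exp.2
    have hc : 0 < 2 * π ^ 2 * v := by positivity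
    have hn2 : (n : ℝ) ≤ (n : ℝ) ^ 2 := by
      rcases Nat.eq_zero_or_pos n with h | h
      · simp [h]
      · have h1 : (1 : ℝ) ≤ (n : ℝ) := by exact_mod_cast h
        nlinarith
    have hq : 3 * (n : ℝ) + 1 ≤ ((n : ℝ) + 1) ^ 2 := by nlinarith
    nlinarith [mul_le_mul_of_nonneg_left hq hc.le]
  -- decomposition
  set g : ℤ → ℝ := fun n => Real.exp (-(2 * π ^ 2 * v) * (n : ℝ) ^ 2) * Real.cos (2 * π * n * t)
    with hg_def
  have hg : Summable g := summable_Fterm v t hv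
  have hgnat : Summable fun n : ℕ => g n := hg.comp_injective fun a b => by exact_mod_cast id
  have hgneg : Summable fun n : ℕ => g (-(n + 1)) := hg.comp_injective fun a b h => by omega
  have hgnat1 : Summable fun n : ℕ => g ((n : ℤ) + 1) := by
    have := hgnat.comp_injective (add_left_injective (1:ℕ))
    refine this.congr fun n => ?_
    simp only [Function.comp]
    norm_cast
  have hdecomp : Fser v t = g 0 + ((∑' n : ℕ, g ((n : ℤ) + 1)) + ∑' n : ℕ, g (-((n : ℤ) + 1))) := by
    rw [Fser, tsum_of_nat_of_neg_add_one hgnat hgneg, Summable.tsum_eq_zero_add hgnat]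
    push_cast
    ring
  have hg0 : g 0 = 1 := by simp [hg_def]
  have habs : ∀ m : ℤ, |g m| ≤ Real.exp (-(2 * π ^ 2 * v) * (m : ℝ) ^ 2) := by
    intro m
    rw [hg_def, abs_mul, Real.abs_exp]
    calc Real.exp (-(2 * π ^ 2 * v) * (m : ℝ) ^ 2) * |Real.cos (2 * π * m * t)|
        ≤ Real.exp (-(2 * π ^ 2 * v) * (m : ℝ) ^ 2) * 1 := by gcongr; exact abs_cos_le_one _
      _ = _ := mul_one _
  have htail : ∀ s : ℕ → ℝ, Summable s → (∀ n : ℕ, |s n| ≤ ε * (ε ^ 3) ^ n) →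
      |∑' n : ℕ, s n| ≤ ε / (1 - ε ^ 3) := by
    intro s hs hb
    have hsabs : Summable fun n : ℕ => |s n| :=
      Summable.of_nonneg_of_le (fun n => abs_nonneg _) hb hgeo
    calc |∑' n : ℕ, s n| ≤ ∑' n : ℕ, |s n| := by
          simpa [Real.norm_eq_abs] using norm_tsum_le_tsum_norm (f := s) (by simpa using hsabs)
      _ ≤ ∑' n : ℕ, ε * (ε ^ 3) ^ n := Summable.tsum_le_tsum hb hsabs hgeo
      _ = ε / (1 - ε ^ 3) := hgeosum
  have hb1 : ∀ n : ℕ, |g ((n : ℤ) + 1)| ≤ ε * (ε ^ 3) ^ n := by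
    intro n
    refine le_trans (habs _) ?_
    have : (((n : ℤ) + 1 : ℤ) : ℝ) = (n : ℝ) + 1 := by push_cast; ring
    rw [this]
    exact hpowbd n
  have hb2 : ∀ n : ℕ, |g (-((n : ℤ) + 1))| ≤ ε * (ε ^ 3) ^ n := by
    intro n
    refine le_trans (habs _) ?_
    have : ((-((n : ℤ) + 1) : ℤ) : ℝ) ^ 2 = ((n : ℝ) + 1) ^ 2 := by push_cast; ring
    rw [this]
    exact hpowbd n
  rw [hdecomp, hg0]
  rw [add_sub_cancel_left]
  calc |(∑' n : ℕ, g ((n : ℤ) + 1)) + ∑' n : ℕ, g (-((n : ℤ) + 1))|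
        ≤ |∑' n : ℕ, g ((n : ℤ) + 1)| + |∑' n : ℕ, g (-((n : ℤ) + 1))| := abs_add_le _ _
      _ ≤ ε / (1 - ε ^ 3) + ε / (1 - ε ^ 3) :=
          add_le_add (htail _ hgnat1 hb1) (htail _ hgneg hb2)
      _ = 2 * ε / (1 - ε ^ 3) := by ring

end Fbounds

lemma one_le_Fser_zero (v : ℝ) (hv : 0 < v) : 1 ≤ Fser v 0 := by
  set g : ℤ → ℝ := fun n => Real.exp (-(2 * π ^ 2 * v) * (n : ℝ) ^ 2) * Real.cos (2 * π * n * 0)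
    with hg_def
  have hgpos : ∀ m : ℤ, 0 ≤ g m := by
    intro m
    rw [hg_def]
    simp only [mul_zero, Real.cos_zero, mul_one]
    positivity
  have hg : Summable g := summable_Fterm v 0 hv
  have hgnat : Summable fun n : ℕ => g n := hg.comp_injective fun a b => by exact_mod_cast id
  have hgneg : Summable fun n : ℕ => g (-(n + 1)) := hg.comp_injective fun a b h => by omega
  have hgnat1 : Summable fun n : ℕ => g ((n : ℤ) + 1) := by
    have := hgnat.comp_injective (add_left_injective (1 : ℕ))
    refine this.congr fun n => ?_
    simp only [Function.comp]
    norm_cast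
  have hdecomp : Fser v 0 = g 0 + ((∑' n : ℕ, g ((n : ℤ) + 1)) + ∑' n : ℕ, g (-((n : ℤ) + 1))) := by
    rw [Fser, tsum_of_nat_of_neg_add_one hgnat hgneg, Summable.tsum_eq_zero_add hgnat]
    push_cast
    ring
  have hg0 : g 0 = 1 := by simp [hg_def]
  rw [hdecomp, hg0]
  have h1 : 0 ≤ ∑' n : ℕ, g ((n : ℤ) + 1) := tsum_nonneg fun n => hgpos _
  have h2 : 0 ≤ ∑' n : ℕ, g (-((n : ℤ) + 1)) := tsum_nonneg fun n => hgpos _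
  linarith

lemma poisson (v t : ℝ) (hv : 0 < v) :
    ∑' x : ℤ, Real.exp (-((x : ℝ) - t) ^ 2 / (2 * v)) =
      Real.sqrt (2 * Real.pi * v) * Fser v t := poisson_tsum v t hv

-- numeric: exp(π²/4) ≥ 10
lemma ten_le_exp_pisq4 : (10 : ℝ) ≤ Real.exp (π ^ 2 / 4) := by
  have h1 : (2.7182818283 : ℝ) < Real.exp 1 := Real.exp_one_gt_d9
  have hπ : 3.141592 < π := Real.pi_gt_d6
  have h2 : Real.exp (π ^ 2 / 4) = Real.exp 1 * Real.exp 1 * Real.exp (π ^ 2 / 4 - 2) := by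
    rw [← Real.exp_add, ← Real.exp_add]; ring_nf
  have h3 : (0.467 : ℝ) ≤ π ^ 2 / 4 - 2 := by nlinarith
  have h4 : (1.467 : ℝ) ≤ Real.exp (π ^ 2 / 4 - 2) := by
    have := Real.add_one_le_exp (π ^ 2 / 4 - 2)
    linarith
  have h5 : (0:ℝ) < Real.exp (π ^ 2 / 4 - 2) := Real.exp_pos _
  rw [h2]
  nlinarith

lemma eps_le_tenth {u : ℝ} (hu : 1 / 8 ≤ u) : Real.exp (-(2 * π ^ 2 * u)) ≤ 1 / 10 := by
  have h1 : Real.exp (-(2 * π ^ 2 * u)) ≤ Real.exp (-(π ^ 2 / 4)) := by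
    apply Real.exp_le_exp.2
    have : (0:ℝ) < π ^ 2 := by positivity
    nlinarith
  have h2 : Real.exp (-(π ^ 2 / 4)) ≤ 1 / 10 := by
    rw [Real.exp_neg]
    rw [inv_le_comm₀ (Real.exp_pos _) (by norm_num)]
    simpa using ten_le_exp_pisq4
  linarith

lemma delta_le {e : ℝ} (he0 : 0 < e) (he : e ≤ 1 / 10) :
    2 * e / (1 - e ^ 3) ≤ 2.01 * e := by
  have h3 : e ^ 3 ≤ (1 / 10 : ℝ) ^ 3 := pow_le_pow_left₀ he0.le he 3
  have h4 : (0:ℝ) < e ^ 3 := by positivity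
  rw [div_le_iff₀ (by nlinarith)]
  nlinarith

lemma ratio_bound {ε A B C D : ℝ} (hε0 : 0 < ε) (hε : ε ≤ 1 / 10)
    (hA : |A - 1| ≤ 2.01 * ε) (hB1 : 1 ≤ B) (hB : B ≤ 1 + 0.21 * ε)
    (hC1 : 1 ≤ C) (hC : C ≤ 1 + 0.21 * ε) (hD1 : 1 ≤ D) (hD : D ≤ 1 + 2.01 * ε) :
    |Real.log (A * B / (C * D))| ≤ 5 * ε := by
  obtain ⟨hA1', hA2'⟩ := abs_le.mp hA
  have hA1 : 1 - 2.01 * ε ≤ A := by linarith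
  have hA2 : A ≤ 1 + 2.01 * ε := by linarith
  have hApos : 0 < A := by nlinarith
  have hBpos : 0 < B := by linarith
  have hCpos : 0 < C := by linarith
  have hDpos : 0 < D := by linarith
  have hlog : Real.log (A * B / (C * D)) =
      Real.log A + Real.log B - (Real.log C + Real.log D) := by
    rw [Real.log_div (by positivity) (by positivity), Real.log_mul hApos.ne' hBpos.ne',
      Real.log_mul hCpos.ne' hDpos.ne']
  have hlogA_up : Real.log A ≤ 2.01 * ε := by
    have := Real.log_le_sub_one_of_pos hApos
    linarith
  have hlogA_lo : -(2.6 * ε) ≤ Real.log A := by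
    have h1 := Real.log_le_sub_one_of_pos (inv_pos.mpr hApos)
    rw [Real.log_inv] at h1
    have h2 : A⁻¹ ≤ 1 + 2.6 * ε := by
      rw [inv_eq_one_div, div_le_iff₀ hApos]
      nlinarith
    linarith
  have hlogB_up : Real.log B ≤ 0.21 * ε := by
    have := Real.log_le_sub_one_of_pos hBpos; linarith
  have hlogB_lo : 0 ≤ Real.log B := Real.log_nonneg hB1
  have hlogC_up : Real.log C ≤ 0.21 * ε := by
    have := Real.log_le_sub_one_of_pos hCpos; linarith
  have hlogC_lo : 0 ≤ Real.log C := Real.log_nonneg hC1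
  have hlogD_up : Real.log D ≤ 2.01 * ε := by
    have := Real.log_le_sub_one_of_pos hDpos; linarith
  have hlogD_lo : 0 ≤ Real.log D := Real.log_nonneg hD1
  rw [hlog]
  rw [abs_le]
  constructor <;> nlinarith

lemma Sg_eq (v : ℝ) (hv : 0 < v) : Sg v = Real.sqrt (2 * π * v) * Fser v 0 := by
  rw [Sg, ← poisson v 0 hv]
  refine tsum_congr fun y => ?_
  rw [sub_zero]

lemma Sg_pos (v : ℝ) (hv : 0 < v) : 0 < Sg v := by
  rw [Sg_eq v hv]
  have h1 : 0 < Real.sqrt (2 * π * v) := Real.sqrt_pos.mpr (by positivity)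
  nlinarith [one_le_Fser_zero v hv]

lemma pmf_pos (v : ℝ) (hv : 0 < v) (z : ℤ) : 0 < discreteGaussianPMF v z :=
  div_pos (Real.exp_pos _) (Sg_pos v hv)

lemma pmf_nonneg (v : ℝ) (hv : 0 < v) (z : ℤ) : 0 ≤ discreteGaussianPMF v z :=
  (pmf_pos v hv z).le

-- the key one-step estimate
lemma step (v w : ℝ) (hw : 1 / 4 ≤ w) (hvw : w ≤ v) (z : ℤ) :
    Real.exp (-(5 * Real.exp (-(2 * π ^ 2 * (v * w / (v + w)))))) *
        discreteGaussianPMF (v + w) z ≤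
      convZ (discreteGaussianPMF v) (discreteGaussianPMF w) z ∧
    convZ (discreteGaussianPMF v) (discreteGaussianPMF w) z ≤
      Real.exp (5 * Real.exp (-(2 * π ^ 2 * (v * w / (v + w))))) *
        discreteGaussianPMF (v + w) z := by
  have hw0 : 0 < w := by linarith
  have hv0 : 0 < v := by linarith
  have hvw0 : 0 < v + w := by linarith
  set s2 : ℝ := v * w / (v + w) with hs2_def
  clear_value s2
  have hs20 : 0 < s2 := by rw [hs2_def]; positivity
  have hs18 : 1 / 8 ≤ s2 := by
    rw [hs2_def, le_div_iff₀ hvw0]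
    nlinarith
  set μ : ℝ := v * z / (v + w) with hμ_def
  clear_value μ
  set ε : ℝ := Real.exp (-(2 * π ^ 2 * s2)) with hε_def
  clear_value ε
  have hε0 : 0 < ε := hε_def ▸ Real.exp_pos _
  have hε10 : ε ≤ 1 / 10 := hε_def ▸ eps_le_tenth hs18
  -- convolution identity
  have hconv : convZ (discreteGaussianPMF v) (discreteGaussianPMF w) z =
      (1 / (Sg v * Sg w)) * (Real.exp (-(z : ℝ) ^ 2 / (2 * (v + w))) *
        ∑' x : ℤ, Real.exp (-((x : ℝ) - μ) ^ 2 / (2 * s2))) := by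
    rw [convZ, ← tsum_mul_left, ← tsum_mul_left]
    refine tsum_congr fun x => ?_
    show discreteGaussianPMF v x * discreteGaussianPMF w (z - x) = _
    rw [discreteGaussianPMF, discreteGaussianPMF]
    show Real.exp (-(x : ℝ) ^ 2 / (2 * v)) / Sg v *
      (Real.exp (-((z - x : ℤ) : ℝ) ^ 2 / (2 * w)) / Sg w) = _
    have hSv := (Sg_pos v hv0).ne'
    have hSw := (Sg_pos w hw0).ne'
    rw [div_mul_div_comm, div_eq_mul_one_div, mul_comm (Real.exp _ * Real.exp _)]
    congr 1
    rw [← Real.exp_add, ← Real.exp_add]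
    congr 1
    rw [hμ_def, hs2_def]
    push_cast
    field_simp
    ring
  rw [hconv, poisson s2 μ hs20]
  -- rewrite the target pmf
  have hQ : discreteGaussianPMF (v + w) z =
      Real.exp (-(z : ℝ) ^ 2 / (2 * (v + w))) / (Real.sqrt (2 * π * (v + w)) * Fser (v + w) 0) := by
    rw [discreteGaussianPMF]
    show Real.exp (-(z : ℝ) ^ 2 / (2 * (v + w))) / Sg (v + w) = _
    rw [Sg_eq _ hvw0]
  -- the sqrt identity
  have hsqrt : Real.sqrt (2 * π * s2) * Real.sqrt (2 * π * (v + w)) =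
      Real.sqrt (2 * π * v) * Real.sqrt (2 * π * w) := by
    rw [← Real.sqrt_mul (by positivity), ← Real.sqrt_mul (by positivity)]
    congr 1
    rw [hs2_def]
    field_simp
  -- bounds on the four factors
  have hA : |Fser s2 μ - 1| ≤ 2.01 * ε := by
    refine le_trans (Fser_bounds s2 μ hs20) ?_
    rw [← hε_def]
    exact delta_le hε0 hε10
  have hFbd : ∀ u : ℝ, 0 < u → s2 ≤ u → Fser u 0 ≤ 1 + 2.01 * Real.exp (-(2 * π ^ 2 * u)) := by
    intro u hu hsu
    have h1 := (abs_le.mp (Fser_bounds u 0 hu)).2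
    have he0 : (0:ℝ) < Real.exp (-(2 * π ^ 2 * u)) := Real.exp_pos _
    have he10 : Real.exp (-(2 * π ^ 2 * u)) ≤ 1 / 10 := eps_le_tenth (by linarith)
    have := delta_le he0 he10
    linarith
  have heps_mono : ∀ u : ℝ, 2 * s2 ≤ u → Real.exp (-(2 * π ^ 2 * u)) ≤ ε ^ 2 := by
    intro u hu
    rw [hε_def, ← Real.exp_nat_mul]
    apply Real.exp_le_exp.2
    have : (0:ℝ) < π ^ 2 := by positivity
    push_cast
    nlinarith
  have hε2 : ε ^ 2 ≤ (1 / 10) * ε := by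
    have h := mul_le_mul_of_nonneg_left hε10 hε0.le
    rw [pow_two]
    linarith only [h]
  have hv2s : 2 * s2 ≤ v := by
    rw [hs2_def, ← mul_div_assoc, div_le_iff₀ hvw0]
    nlinarith
  have hvw2s : 2 * s2 ≤ v + w := by
    rw [hs2_def, ← mul_div_assoc, div_le_iff₀ hvw0]
    nlinarith [sq_nonneg (v - w)]
  have hws : s2 ≤ w := by
    rw [hs2_def, div_le_iff₀ hvw0]
    nlinarith
  have hB1 : 1 ≤ Fser (v + w) 0 := one_le_Fser_zero _ hvw0
  have hB : Fser (v + w) 0 ≤ 1 + 0.21 * ε := by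
    have h1 := hFbd (v + w) hvw0 (by linarith)
    have h2 := heps_mono (v + w) hvw2s
    have h3 : (0:ℝ) ≤ Real.exp (-(2 * π ^ 2 * (v + w))) := (Real.exp_pos _).le
    linarith only [h1, h2, h3, hε2]
  have hC1 : 1 ≤ Fser v 0 := one_le_Fser_zero _ hv0
  have hC : Fser v 0 ≤ 1 + 0.21 * ε := by
    have h1 := hFbd v hv0 (by linarith)
    have h2 := heps_mono v hv2s
    have h3 : (0:ℝ) ≤ Real.exp (-(2 * π ^ 2 * v)) := (Real.exp_pos _).le
    linarith only [h1, h2, h3, hε2]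
  have hD1 : 1 ≤ Fser w 0 := one_le_Fser_zero _ hw0
  have hD : Fser w 0 ≤ 1 + 2.01 * ε := by
    have h1 := hFbd w hw0 hws
    have h2 : Real.exp (-(2 * π ^ 2 * w)) ≤ ε := by
      rw [hε_def]
      apply Real.exp_le_exp.2
      have : (0:ℝ) < π ^ 2 := by positivity
      have h4 := mul_le_mul_of_nonneg_left hws (by positivity : (0:ℝ) ≤ 2 * π ^ 2)
      linarith only [h4]
    linarith only [h1, h2]
  have hKlog := ratio_bound hε0 hε10 hA hB1 hB hC1 hC hD1 hD
  set K : ℝ := Fser s2 μ * Fser (v + w) 0 / (Fser v 0 * Fser w 0) with hK_def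
  have hApos : 0 < Fser s2 μ := by
    have h := (abs_le.mp hA).1
    linarith only [h, hε10, hε0]
  have hKpos : 0 < K := by
    rw [hK_def]
    positivity
  have hKbounds : Real.exp (-(5 * ε)) ≤ K ∧ K ≤ Real.exp (5 * ε) := by
    obtain ⟨h1, h2⟩ := abs_le.mp hKlog
    constructor
    · calc Real.exp (-(5 * ε)) ≤ Real.exp (Real.log K) := Real.exp_le_exp.2 h1
        _ = K := Real.exp_log hKpos
    · calc K = Real.exp (Real.log K) := (Real.exp_log hKpos).symm
        _ ≤ Real.exp (5 * ε) := Real.exp_le_exp.2 h2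
  -- express the convolution in terms of K and the pmf
  have hkey : (1 / (Sg v * Sg w)) * (Real.exp (-(z : ℝ) ^ 2 / (2 * (v + w))) *
      (Real.sqrt (2 * π * s2) * Fser s2 μ)) = K * discreteGaussianPMF (v + w) z := by
    rw [hQ, hK_def, Sg_eq v hv0, Sg_eq w hw0]
    have h1 : Real.sqrt (2 * π * v) ≠ 0 := by positivity
    have h2 : Real.sqrt (2 * π * w) ≠ 0 := by positivity
    have h3 : Real.sqrt (2 * π * (v + w)) ≠ 0 := by positivity
    have h4 : Fser v 0 ≠ 0 := by linarith
    have h5 : Fser w 0 ≠ 0 := by linarith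
    have h6 : Fser (v + w) 0 ≠ 0 := by linarith
    have hsqrt' : Real.sqrt s2 * Real.sqrt (v + w) = Real.sqrt v * Real.sqrt w := by
      rw [← Real.sqrt_mul hs20.le, ← Real.sqrt_mul hv0.le]
      congr 1
      rw [hs2_def]
      field_simp
    field_simp
    linear_combination hsqrt
  rw [hkey]
  have hQpos : 0 < discreteGaussianPMF (v + w) z := pmf_pos _ hvw0 z
  constructor
  · exact mul_le_mul_of_nonneg_right hKbounds.1 hQpos.le
  · exact mul_le_mul_of_nonneg_right hKbounds.2 hQpos.le

lemma pmf_mul_eq (v w : ℝ) (hv : 0 < v) (hw : 0 < w) (z x : ℤ) :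
    discreteGaussianPMF v x * discreteGaussianPMF w (z - x) =
      1 / (Sg v * Sg w) * (Real.exp (-(z : ℝ) ^ 2 / (2 * (v + w))) *
        Real.exp (-((x : ℝ) - v * z / (v + w)) ^ 2 / (2 * (v * w / (v + w))))) := by
  have hvw0 : 0 < v + w := by linarith
  rw [discreteGaussianPMF, discreteGaussianPMF]
  show Real.exp (-(x : ℝ) ^ 2 / (2 * v)) / Sg v *
      (Real.exp (-((z - x : ℤ) : ℝ) ^ 2 / (2 * w)) / Sg w) = _
  rw [div_mul_div_comm, div_eq_mul_one_div, mul_comm (Real.exp _ * Real.exp _)]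
  congr 1
  rw [← Real.exp_add, ← Real.exp_add]
  congr 1
  push_cast
  field_simp
  ring

lemma summable_pmf_mul (v w : ℝ) (hv : 0 < v) (hw : 0 < w) (z : ℤ) :
    Summable fun x : ℤ => discreteGaussianPMF v x * discreteGaussianPMF w (z - x) := by
  have hvw0 : 0 < v + w := by linarith
  have h := ((summable_shift (v * w / (v + w)) (v * z / (v + w))
      (by positivity)).mul_left
      (Real.exp (-(z : ℝ) ^ 2 / (2 * (v + w))))).mul_left (1 / (Sg v * Sg w))
  exact h.congr fun x => (pmf_mul_eq v w hv hw z x).symm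

lemma key_induction (σ : ℝ) (hσ : 1 / 2 ≤ σ) :
    ∀ n : ℕ, 1 ≤ n → ∀ z : ℤ,
      Real.exp (-(5 * ∑ k ∈ Finset.Icc 1 (n - 1),
            Real.exp (-2 * π ^ 2 * σ ^ 2 * (k : ℝ) / ((k : ℝ) + 1)))) *
          discreteGaussianPMF ((n : ℝ) * σ ^ 2) z ≤ sumDiscreteGaussianPMF (σ ^ 2) n z ∧
      sumDiscreteGaussianPMF (σ ^ 2) n z ≤
        Real.exp (5 * ∑ k ∈ Finset.Icc 1 (n - 1),
            Real.exp (-2 * π ^ 2 * σ ^ 2 * (k : ℝ) / ((k : ℝ) + 1))) *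
          discreteGaussianPMF ((n : ℝ) * σ ^ 2) z := by
  have hσ0 : 0 < σ := by linarith
  have hσ2 : (1 / 4 : ℝ) ≤ σ ^ 2 := by nlinarith
  have hσ2p : (0 : ℝ) < σ ^ 2 := by positivity
  intro n hn
  induction n, hn using Nat.le_induction with
  | base =>
    intro z
    have h1 : sumDiscreteGaussianPMF (σ ^ 2) 1 z = discreteGaussianPMF (σ ^ 2) z := by
      show convZ (sumDiscreteGaussianPMF (σ ^ 2) 0) (discreteGaussianPMF (σ ^ 2)) z = _
      rw [convZ]
      rw [tsum_eq_single 0 (by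
        intro b hb
        show (if b = 0 then (1:ℝ) else 0) * _ = 0
        rw [if_neg hb, zero_mul])]
      show (if (0:ℤ) = 0 then (1:ℝ) else 0) * _ = _
      rw [if_pos rfl, one_mul, sub_zero]
    have h2 : ((1 : ℕ) : ℝ) * σ ^ 2 = σ ^ 2 := by norm_num
    have h3 : Finset.Icc 1 (1 - 1) = (∅ : Finset ℕ) := by
      norm_num
    rw [h1, h2, h3]
    simp
  | succ n hn IH =>
    intro z
    obtain ⟨m, rfl⟩ : ∃ m, n = m + 1 := ⟨n - 1, (Nat.succ_pred_eq_of_pos hn).symm⟩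
    set v : ℝ := ((m + 1 : ℕ) : ℝ) * σ ^ 2 with hv_def
    set w : ℝ := σ ^ 2 with hw_def
    have hv0 : 0 < v := by rw [hv_def]; positivity
    have hvw : w ≤ v := by
      rw [hv_def, hw_def]
      have h1 : (1 : ℝ) ≤ ((m + 1 : ℕ) : ℝ) := by exact_mod_cast hn
      nlinarith
    have hvw0 : 0 < v + w := by linarith
    set A : ℝ := 5 * ∑ k ∈ Finset.Icc 1 (m + 1 - 1),
        Real.exp (-2 * π ^ 2 * σ ^ 2 * (k : ℝ) / ((k : ℝ) + 1)) with hA_def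
    -- the one-step estimate at (v, w)
    have hstep := step v w hσ2 hvw z
    set B : ℝ := 5 * Real.exp (-(2 * π ^ 2 * (v * w / (v + w)))) with hB_def
    have hG_nonneg : ∀ y : ℤ, 0 ≤ discreteGaussianPMF w y := fun y => (pmf_pos w hσ2p y).le
    have hQ_pos : ∀ y : ℤ, 0 < discreteGaussianPMF v y := fun y => pmf_pos v hv0 y
    have hP_le : ∀ x : ℤ, sumDiscreteGaussianPMF (σ ^ 2) (m + 1) x ≤
        Real.exp A * discreteGaussianPMF v x := fun x => ((IH x).2)
    have hP_ge : ∀ x : ℤ, Real.exp (-A) * discreteGaussianPMF v x ≤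
        sumDiscreteGaussianPMF (σ ^ 2) (m + 1) x := fun x => ((IH x).1)
    have hP_pos : ∀ x : ℤ, 0 < sumDiscreteGaussianPMF (σ ^ 2) (m + 1) x := fun x =>
      lt_of_lt_of_le (mul_pos (Real.exp_pos _) (hQ_pos x)) (hP_ge x)
    have hQG_sum : Summable fun x : ℤ =>
        discreteGaussianPMF v x * discreteGaussianPMF w (z - x) :=
      summable_pmf_mul v w hv0 hσ2p z
    have hPG_sum : Summable fun x : ℤ =>
        sumDiscreteGaussianPMF (σ ^ 2) (m + 1) x * discreteGaussianPMF w (z - x) := by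
      refine Summable.of_nonneg_of_le
        (fun x => mul_nonneg (hP_pos x).le (hG_nonneg _)) (fun x => ?_)
        (hQG_sum.mul_left (Real.exp A))
      calc sumDiscreteGaussianPMF (σ ^ 2) (m + 1) x * discreteGaussianPMF w (z - x)
          ≤ (Real.exp A * discreteGaussianPMF v x) * discreteGaussianPMF w (z - x) :=
            mul_le_mul_of_nonneg_right (hP_le x) (hG_nonneg _)
        _ = Real.exp A * (discreteGaussianPMF v x * discreteGaussianPMF w (z - x)) := by ring
    have hconv_def : sumDiscreteGaussianPMF (σ ^ 2) (m + 1 + 1) z =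
        convZ (sumDiscreteGaussianPMF (σ ^ 2) (m + 1)) (discreteGaussianPMF (σ ^ 2)) z := rfl
    -- upper bound
    have hupper : sumDiscreteGaussianPMF (σ ^ 2) (m + 1 + 1) z ≤
        Real.exp A * convZ (discreteGaussianPMF v) (discreteGaussianPMF w) z := by
      rw [hconv_def, convZ, convZ, ← tsum_mul_left]
      refine Summable.tsum_le_tsum (fun x => ?_) hPG_sum (hQG_sum.mul_left (Real.exp A))
      calc sumDiscreteGaussianPMF (σ ^ 2) (m + 1) x * discreteGaussianPMF (σ ^ 2) (z - x)
          ≤ (Real.exp A * discreteGaussianPMF v x) * discreteGaussianPMF w (z - x) :=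
            mul_le_mul_of_nonneg_right (hP_le x) (hG_nonneg _)
        _ = Real.exp A * (discreteGaussianPMF v x * discreteGaussianPMF w (z - x)) := by ring
    have hlower : Real.exp (-A) * convZ (discreteGaussianPMF v) (discreteGaussianPMF w) z ≤
        sumDiscreteGaussianPMF (σ ^ 2) (m + 1 + 1) z := by
      rw [hconv_def, convZ, convZ, ← tsum_mul_left]
      refine Summable.tsum_le_tsum (fun x => ?_) ?_ hPG_sum
      · calc Real.exp (-A) * (discreteGaussianPMF v x * discreteGaussianPMF w (z - x))
            = (Real.exp (-A) * discreteGaussianPMF v x) * discreteGaussianPMF w (z - x) := by ring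
          _ ≤ sumDiscreteGaussianPMF (σ ^ 2) (m + 1) x * discreteGaussianPMF (σ ^ 2) (z - x) :=
            mul_le_mul_of_nonneg_right (hP_ge x) (hG_nonneg _)
      · exact hQG_sum.mul_left (Real.exp (-A))
    -- identify parameters
    have hvw_eq : v + w = ((m + 1 + 1 : ℕ) : ℝ) * σ ^ 2 := by
      rw [hv_def, hw_def]
      push_cast
      ring
    have hA'_eq : (5 : ℝ) * ∑ k ∈ Finset.Icc 1 (m + 1 + 1 - 1),
        Real.exp (-2 * π ^ 2 * σ ^ 2 * (k : ℝ) / ((k : ℝ) + 1)) = A + B := by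
      rw [hA_def, hB_def]
      have h1 : (m + 1 + 1 - 1 : ℕ) = (m + 1 - 1) + 1 := by omega
      rw [h1, Finset.sum_Icc_succ_top (by omega : 1 ≤ m + 1 - 1 + 1)]
      have h2 : (m + 1 - 1 : ℕ) + 1 = m + 1 := by omega
      have h3 : -2 * π ^ 2 * σ ^ 2 * ((m + 1 : ℕ) : ℝ) / (((m + 1 : ℕ) : ℝ) + 1) =
          -(2 * π ^ 2 * (v * w / (v + w))) := by
        rw [hv_def, hw_def]
        have hd : ((m + 1 : ℕ) : ℝ) * σ ^ 2 + σ ^ 2 ≠ 0 := by positivity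
        field_simp
      rw [h2, h3]
      ring
    rw [hA'_eq, ← hvw_eq]
    constructor
    · calc Real.exp (-(A + B)) * discreteGaussianPMF (v + w) z
          = Real.exp (-A) * (Real.exp (-B) * discreteGaussianPMF (v + w) z) := by
            rw [neg_add, Real.exp_add, mul_assoc]
        _ ≤ Real.exp (-A) * convZ (discreteGaussianPMF v) (discreteGaussianPMF w) z := by
            apply mul_le_mul_of_nonneg_left _ (Real.exp_pos _).le
            exact hstep.1
        _ ≤ sumDiscreteGaussianPMF (σ ^ 2) (m + 1 + 1) z := hlower
    · calc sumDiscreteGaussianPMF (σ ^ 2) (m + 1 + 1) z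
          ≤ Real.exp A * convZ (discreteGaussianPMF v) (discreteGaussianPMF w) z := hupper
        _ ≤ Real.exp A * (Real.exp B * discreteGaussianPMF (v + w) z) := by
            apply mul_le_mul_of_nonneg_left _ (Real.exp_pos _).le
            exact hstep.2
        _ = Real.exp (A + B) * discreteGaussianPMF (v + w) z := by
            rw [← mul_assoc, ← Real.exp_add]


/-- Convolution of many discrete Gaussians: if `Zₙ` is the sum of `n` i.i.d. `N_ℤ(0,σ²)`
and `Wₙ ~ N_ℤ(0, nσ²)`, then for every `z ∈ ℤ`,
`|log(P[Zₙ=z]/P[Wₙ=z])| ≤ 5·Σ_{k=1}^{n−1} exp(−2π²σ²·k/(k+1)) ≤ 5(n−1)·exp(−π²σ²)`. -/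
theorem convolution_many_discrete_gaussians_close (σ : ℝ) (hσ : 1 / 2 ≤ σ) (n : ℕ)
    (hn : 1 ≤ n) (z : ℤ) :
    |Real.log (sumDiscreteGaussianPMF (σ ^ 2) n z / discreteGaussianPMF ((n : ℝ) * σ ^ 2) z)| ≤
        5 * ∑ k ∈ Finset.Icc 1 (n - 1),
          Real.exp (-2 * Real.pi ^ 2 * σ ^ 2 * (k : ℝ) / ((k : ℝ) + 1)) ∧
      5 * ∑ k ∈ Finset.Icc 1 (n - 1),
          Real.exp (-2 * Real.pi ^ 2 * σ ^ 2 * (k : ℝ) / ((k : ℝ) + 1)) ≤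
        5 * ((n : ℝ) - 1) * Real.exp (-Real.pi ^ 2 * σ ^ 2) := by
  have hσ0 : 0 < σ := by linarith
  have hnv : (0 : ℝ) < (n : ℝ) * σ ^ 2 := by
    have h1 : (1 : ℝ) ≤ (n : ℝ) := by exact_mod_cast hn
    positivity
  obtain ⟨h1, h2⟩ := key_induction σ hσ n hn z
  set A : ℝ := 5 * ∑ k ∈ Finset.Icc 1 (n - 1),
      Real.exp (-2 * π ^ 2 * σ ^ 2 * (k : ℝ) / ((k : ℝ) + 1)) with hA_def
  have hQ : 0 < discreteGaussianPMF ((n : ℝ) * σ ^ 2) z := pmf_pos _ hnv z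
  have hP : 0 < sumDiscreteGaussianPMF (σ ^ 2) n z :=
    lt_of_lt_of_le (mul_pos (Real.exp_pos _) hQ) h1
  constructor
  · rw [Real.log_div hP.ne' hQ.ne', abs_le]
    constructor
    · have h3 : Real.log (Real.exp (-A) * discreteGaussianPMF ((n : ℝ) * σ ^ 2) z) ≤
          Real.log (sumDiscreteGaussianPMF (σ ^ 2) n z) := Real.log_le_log (mul_pos (Real.exp_pos _) hQ) h1
      rw [Real.log_mul (Real.exp_pos _).ne' hQ.ne', Real.log_exp] at h3
      linarith
    · have h3 : Real.log (sumDiscreteGaussianPMF (σ ^ 2) n z) ≤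
          Real.log (Real.exp A * discreteGaussianPMF ((n : ℝ) * σ ^ 2) z) := Real.log_le_log hP h2
      rw [Real.log_mul (Real.exp_pos _).ne' hQ.ne', Real.log_exp] at h3
      linarith
  · have hterm : ∀ k ∈ Finset.Icc 1 (n - 1),
        Real.exp (-2 * π ^ 2 * σ ^ 2 * (k : ℝ) / ((k : ℝ) + 1)) ≤ Real.exp (-π ^ 2 * σ ^ 2) := by
      intro k hk
      have hk1 : (1 : ℝ) ≤ (k : ℝ) := by exact_mod_cast (Finset.mem_Icc.mp hk).1
      apply Real.exp_le_exp.2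
      rw [div_le_iff₀ (by linarith)]
      have hps : (0 : ℝ) ≤ π ^ 2 * σ ^ 2 := by positivity
      nlinarith [mul_nonneg hps (sub_nonneg.mpr hk1)]
    have hsum := Finset.sum_le_card_nsmul _ _ _ hterm
    rw [Nat.card_Icc] at hsum
    have hc : (n - 1 + 1 - 1 : ℕ) = n - 1 := by omega
    rw [hc, nsmul_eq_mul] at hsum
    have hcast : ((n - 1 : ℕ) : ℝ) = (n : ℝ) - 1 := by
      rw [Nat.cast_sub hn, Nat.cast_one]
    rw [hcast] at hsum
    calc 5 * ∑ k ∈ Finset.Icc 1 (n - 1),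
          Real.exp (-2 * π ^ 2 * σ ^ 2 * (k : ℝ) / ((k : ℝ) + 1))
        ≤ 5 * (((n : ℝ) - 1) * Real.exp (-π ^ 2 * σ ^ 2)) := by linarith
      _ = 5 * ((n : ℝ) - 1) * Real.exp (-π ^ 2 * σ ^ 2) := by ring
end

section
/- Let γ > 0, x ∈ ℝ^d, and β ∈ (0,1). For the randomized rounding R_γ(x), P[‖R_γ(x)‖₂² ≤ E[‖R_γ(x)‖₂²] + √(2 log(1/β))·γ·(‖x‖₂ + (γ/2)√d)] ≥ 1 − β. -/
open MeasureTheory ProbabilityTheory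

section Aux

private lemma hoeffding_core (p : ℝ) (hp0 : 0 ≤ p) (hp1 : p ≤ 1) (s : ℝ) :
    (1 - p) + p * Real.exp s ≤ Real.exp (p * s + s ^ 2 / 8) := by
  have hD : ∀ u : ℝ, 0 < 1 - p + p * Real.exp u := by
    intro u
    rcases le_total 1 (Real.exp u) with h | h
    · nlinarith [Real.exp_pos u]
    · nlinarith [Real.exp_pos u]
  -- reduce to log inequality
  have key : ∀ u : ℝ, Real.log (1 - p + p * Real.exp u) - p * u - u ^ 2 / 8 ≤ 0 := by
    set φ : ℝ → ℝ := fun u => Real.log (1 - p + p * Real.exp u) - p * u - u ^ 2 / 8 with hφ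
    set g : ℝ → ℝ := fun u => p * Real.exp u / (1 - p + p * Real.exp u) - p - u / 4 with hg
    have hφ' : ∀ u : ℝ, HasDerivAt φ (g u) u := by
      intro u
      have h1 : HasDerivAt (fun u : ℝ => 1 - p + p * Real.exp u) (p * Real.exp u) u :=
        ((Real.hasDerivAt_exp u).const_mul p).const_add (1 - p)
      have h2 := h1.log (hD u).ne'
      have h3 : HasDerivAt (fun u : ℝ => p * u) p u := by
        simpa using (hasDerivAt_id u).const_mul p
      have h4 : HasDerivAt (fun u : ℝ => u ^ 2 / 8) (u / 4) u := by
        have := (hasDerivAt_pow 2 u).div_const 8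
        simpa using this.congr_deriv (by ring)
      exact (h2.sub h3).sub h4
    have hg' : ∀ u : ℝ, HasDerivAt g
        (p * Real.exp u * (1 - p) / (1 - p + p * Real.exp u) ^ 2 - 1 / 4) u := by
      intro u
      have h1 : HasDerivAt (fun u : ℝ => 1 - p + p * Real.exp u) (p * Real.exp u) u :=
        ((Real.hasDerivAt_exp u).const_mul p).const_add (1 - p)
      have hN : HasDerivAt (fun u : ℝ => p * Real.exp u) (p * Real.exp u) u :=
        (Real.hasDerivAt_exp u).const_mul p
      have h2 := hN.div h1 (hD u).ne'
      have h3 : HasDerivAt (fun u : ℝ => u / 4) (1 / 4) u := by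
        simpa using (hasDerivAt_id u).div_const 4
      have := (h2.sub_const p).sub h3
      refine this.congr_deriv ?_
      field_simp
      ring
    have hg'le : ∀ u : ℝ,
        p * Real.exp u * (1 - p) / (1 - p + p * Real.exp u) ^ 2 - 1 / 4 ≤ 0 := by
      intro u
      have h := hD u
      rw [sub_nonpos, div_le_iff₀ (by positivity)]
      nlinarith [sq_nonneg ((1 - p) - p * Real.exp u)]
    have hganti : Antitone g := antitone_of_hasDerivAt_nonpos hg' hg'le
    have hg0 : g 0 = 0 := by
      simp only [hg, Real.exp_zero, mul_one]
      have : 1 - p + p = 1 := by ring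
      rw [this]
      simp
    have hφ0 : φ 0 = 0 := by
      simp only [hφ, Real.exp_zero, mul_one]
      have : 1 - p + p = 1 := by ring
      rw [this]
      simp
    intro u
    show φ u ≤ 0
    rcases le_total 0 u with hu | hu
    · have hA : AntitoneOn φ (Set.Ici 0) := by
        refine antitoneOn_of_hasDerivWithinAt_nonpos (convex_Ici 0)
          (fun y _ => (hφ' y).continuousAt.continuousWithinAt)
          (fun y hy => (hφ' y).hasDerivWithinAt) ?_
        intro y hy
        rw [interior_Ici] at hy
        have : g y ≤ g 0 := hganti (le_of_lt hy)
        linarith [hg0 ▸ this]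
      have := hA (Set.self_mem_Ici) (Set.mem_Ici.2 hu) hu
      rw [hφ0] at this; exact this
    · have hM : MonotoneOn φ (Set.Iic 0) := by
        refine monotoneOn_of_hasDerivWithinAt_nonneg (convex_Iic 0)
          (fun y _ => (hφ' y).continuousAt.continuousWithinAt)
          (fun y hy => (hφ' y).hasDerivWithinAt) ?_
        intro y hy
        rw [interior_Iic] at hy
        have : g 0 ≤ g y := hganti (le_of_lt hy)
        linarith [hg0 ▸ this]
      have := hM (Set.mem_Iic.2 hu) (Set.self_mem_Iic) hu
      rw [hφ0] at this; exact this
  have h1 := key s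
  have h2 : (1 - p) + p * Real.exp s = Real.exp (Real.log (1 - p + p * Real.exp s)) := by
    rw [Real.exp_log (hD s)]
  rw [h2]
  exact Real.exp_le_exp.2 (by linarith)

private lemma convex_exp_bound (p v w t : ℝ) (hp0 : 0 ≤ p) (hp1 : p ≤ 1) :
    (1 - p) * Real.exp (t * v) + p * Real.exp (t * w) ≤
      Real.exp (t * ((1 - p) * v + p * w) + t ^ 2 * (w - v) ^ 2 / 8) := by
  have h := hoeffding_core p hp0 hp1 (t * (w - v))
  have h2 := mul_le_mul_of_nonneg_left h (Real.exp_pos (t * v)).le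
  calc (1 - p) * Real.exp (t * v) + p * Real.exp (t * w)
      = Real.exp (t * v) * ((1 - p) + p * Real.exp (t * (w - v))) := by
        have e : Real.exp (t * v) * Real.exp (t * (w - v)) = Real.exp (t * w) := by
          rw [← Real.exp_add]; ring_nf
        rw [mul_add, ← mul_assoc, mul_comm (Real.exp (t*v)) p, mul_assoc, e]
        ring
    _ ≤ Real.exp (t * v) * Real.exp (p * (t * (w - v)) + (t * (w - v)) ^ 2 / 8) := h2
    _ = Real.exp (t * ((1 - p) * v + p * w) + t ^ 2 * (w - v) ^ 2 / 8) := by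
        rw [← Real.exp_add]
        ring_nf

private lemma two_point_integrable {Ω : Type*} [MeasurableSpace Ω] (μ : Measure Ω)
    [IsFiniteMeasure μ]
    {Y : Ω → ℝ} (hY : Measurable Y) (v w : ℝ)
    (hval : ∀ᵐ ω ∂μ, Y ω = v ∨ Y ω = w) (g : ℝ → ℝ) (hg : Measurable g) :
    Integrable (fun ω => g (Y ω)) μ := by
  refine Integrable.mono' (integrable_const (max ‖g v‖ ‖g w‖))
    ((hg.comp hY).aestronglyMeasurable) ?_
  filter_upwards [hval] with ω h
  rcases h with h | h <;> rw [h]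
  · exact le_max_left _ _
  · exact le_max_right _ _

private lemma two_point_integral {Ω : Type*} [MeasurableSpace Ω] (μ : Measure Ω)
    [IsProbabilityMeasure μ]
    {Y : Ω → ℝ} (hY : Measurable Y) (v w p : ℝ) (hp : 0 ≤ p)
    (hval : ∀ᵐ ω ∂μ, Y ω = v ∨ Y ω = w)
    (hw : μ {ω | Y ω = w} = ENNReal.ofReal p)
    (g : ℝ → ℝ) :
    ∫ ω, g (Y ω) ∂μ = (1 - p) * g v + p * g w := by
  classical
  have hs : MeasurableSet {ω | Y ω = w} := hY (measurableSet_singleton w)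
  have hae : ∀ᵐ ω ∂μ, g (Y ω) =
      g v + ({ω | Y ω = w}).indicator (fun _ => g w - g v) ω := by
    filter_upwards [hval] with ω h
    by_cases hm : ω ∈ {ω | Y ω = w}
    · rw [Set.indicator_of_mem hm]
      have : Y ω = w := hm
      rw [this]; ring
    · rw [Set.indicator_of_notMem hm]
      have : Y ω ≠ w := hm
      rcases h with h | h
      · rw [h]; ring
      · exact absurd h this
  rw [integral_congr_ae hae, integral_add (integrable_const _)
    ((integrable_const _).indicator hs), integral_const, integral_indicator_const _ hs,
    measureReal_def, measureReal_def, hw, ENNReal.toReal_ofReal hp]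
  simp [measure_univ]
  ring

end Aux

set_option maxHeartbeats 1000000 in
/-- High-probability bound on the squared ℓ₂ norm of randomized rounding:
`P[‖R(x)‖₂² ≤ E[‖R(x)‖₂²] + √(2 log(1/β))·γ·(‖x‖₂ + (γ/2)√d)] ≥ 1 − β`. -/
theorem randomized_rounding_l2_high_prob
    {Ω : Type*} [MeasurableSpace Ω] (μ : Measure Ω) [IsProbabilityMeasure μ]
    (d : ℕ) (γ : ℝ) (hγ : 0 < γ) (β : ℝ) (hβ : β ∈ Set.Ioo (0 : ℝ) 1)
    (x : Fin d → ℝ) (R : Ω → Fin d → ℝ)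
    (hmeas : ∀ i, Measurable fun ω => R ω i)
    (hval : ∀ i, ∀ᵐ ω ∂μ,
      R ω i = γ * ⌊x i / γ⌋ ∨ R ω i = γ * ⌊x i / γ⌋ + γ)
    (hprob : ∀ i, μ {ω | R ω i = γ * ⌊x i / γ⌋ + γ} =
      ENNReal.ofReal ((x i - γ * ⌊x i / γ⌋) / γ))
    (hindep : iIndepFun
      (fun i ω => R ω i) μ) :
    ENNReal.ofReal (1 - β) ≤
      μ {ω | ∑ i, (R ω i) ^ 2 ≤
        (∫ ω', ∑ i, (R ω' i) ^ 2 ∂μ) +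
          Real.sqrt (2 * Real.log (1 / β)) * γ *
            (Real.sqrt (∑ i, (x i) ^ 2) + γ / 2 * Real.sqrt d)} := by
  obtain ⟨hβ0, hβ1⟩ := hβ
  rcases Nat.eq_zero_or_pos d with hd | hd
  · subst hd
    have : {ω : Ω | ∑ i : Fin 0, (R ω i) ^ 2 ≤
        (∫ ω', ∑ i : Fin 0, (R ω' i) ^ 2 ∂μ) +
          Real.sqrt (2 * Real.log (1 / β)) * γ *
            (Real.sqrt (∑ i : Fin 0, (x i) ^ 2) + γ / 2 * Real.sqrt (0:ℕ))} = Set.univ := by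
      ext ω; simp
    rw [this, measure_univ]
    exact ENNReal.ofReal_le_one.2 (by linarith)
  -- main case
  set L := Real.log (1 / β) with hLdef
  have hL : 0 ≤ L := Real.log_nonneg (by rw [le_div_iff₀ hβ0]; linarith)
  set nx := Real.sqrt (∑ i, (x i) ^ 2) with hnx
  have hnx0 : 0 ≤ nx := Real.sqrt_nonneg _
  set B : ℝ := 2 * nx + γ * Real.sqrt d with hB
  have hsd : 0 < Real.sqrt d := Real.sqrt_pos.2 (by exact_mod_cast hd)
  have hBpos : 0 < B := by nlinarith
  set lam : ℝ := 2 * Real.sqrt (2 * L) / (γ * B) with hlam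
  have hlam0 : 0 ≤ lam := div_nonneg (by positivity) (by positivity)
  -- per-coordinate quantities
  have hfl : ∀ i, γ * (⌊x i / γ⌋ : ℝ) ≤ x i := by
    intro i
    have h := Int.floor_le (x i / γ)
    have := (le_div_iff₀ hγ).1 h
    linarith [this]
  have hfl2 : ∀ i, x i ≤ γ * (⌊x i / γ⌋ : ℝ) + γ := by
    intro i
    have h := Int.lt_floor_add_one (x i / γ)
    have := (div_lt_iff₀ hγ).1 h
    nlinarith
  have hp0 : ∀ i, 0 ≤ (x i - γ * ⌊x i / γ⌋) / γ := fun i =>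
    div_nonneg (by linarith [hfl i]) hγ.le
  have hp1 : ∀ i, (x i - γ * ⌊x i / γ⌋) / γ ≤ 1 := fun i => by
    rw [div_le_one hγ]; linarith [hfl2 i]
  set X : Fin d → Ω → ℝ := fun i ω => (R ω i) ^ 2 with hX
  have hXmeas : ∀ i, Measurable (X i) := fun i => (hmeas i).pow_const 2
  have hXindep : iIndepFun X μ :=
    hindep.comp (fun _ y => y ^ 2) (fun _ => measurable_id.pow_const 2)
  set p : Fin d → ℝ := fun i => (x i - γ * ⌊x i / γ⌋) / γ with hp
  set m : Fin d → ℝ := fun i =>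
    (1 - p i) * (γ * ⌊x i / γ⌋ : ℝ) ^ 2 + p i * ((γ * ⌊x i / γ⌋ : ℝ) + γ) ^ 2 with hm
  set c : Fin d → ℝ := fun i =>
    ((γ * ⌊x i / γ⌋ : ℝ) + γ) ^ 2 - (γ * ⌊x i / γ⌋ : ℝ) ^ 2 with hc
  -- expectation of each X i
  have hXint : ∀ i, ∫ ω, X i ω ∂μ = m i := fun i =>
    two_point_integral μ (hmeas i) _ _ _ (hp0 i) (hval i) (hprob i) (fun y => y ^ 2)
  have hXintegrable : ∀ i, Integrable (X i) μ := fun i =>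
    two_point_integrable μ (hmeas i) _ _ (hval i) (fun y => y ^ 2)
      (measurable_id.pow_const 2)
  -- mgf of each X i
  have hmgf_i : ∀ i, mgf (X i) μ lam ≤
      Real.exp (lam * m i + lam ^ 2 * (c i) ^ 2 / 8) := by
    intro i
    have heq : mgf (X i) μ lam =
        (1 - p i) * Real.exp (lam * (γ * ⌊x i / γ⌋ : ℝ) ^ 2) +
          p i * Real.exp (lam * ((γ * ⌊x i / γ⌋ : ℝ) + γ) ^ 2) :=
      two_point_integral μ (hmeas i) _ _ _ (hp0 i) (hval i) (hprob i)
        (fun y => Real.exp (lam * y ^ 2))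
    rw [heq, hm, hc]
    exact convex_exp_bound _ _ _ _ (hp0 i) (hp1 i)
  have hint_exp : ∀ i, Integrable (fun ω => Real.exp (lam * X i ω)) μ := fun i =>
    two_point_integrable μ (hmeas i) _ _ (hval i) (fun y => Real.exp (lam * y ^ 2))
      (by measurability)
  have hint_sum : Integrable (fun ω => Real.exp (lam * (∑ i, X i) ω)) μ :=
    hXindep.integrable_exp_mul_sum hXmeas (fun i _ => hint_exp i)
  -- the threshold
  set ES := ∫ ω', ∑ i, (R ω' i) ^ 2 ∂μ with hES
  set tstar := Real.sqrt (2 * L) * γ * (nx + γ / 2 * Real.sqrt d) with htstar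
  set ε := ES + tstar with hε
  have hES_eq : ES = ∑ i, m i := by
    rw [hES, integral_finset_sum _ (fun i _ => hXintegrable i)]
    exact Finset.sum_congr rfl fun i _ => hXint i
  -- sum of squared gaps
  have hcsum : ∑ i, (c i) ^ 2 ≤ γ ^ 2 * B ^ 2 := by
    have h1 : ∀ i, (c i) ^ 2 ≤ γ ^ 2 * (2 * |x i| + γ) ^ 2 := by
      intro i
      have h2 := hfl i
      have h3 := hfl2 i
      have h4 := le_abs_self (x i)
      have h5 := neg_abs_le (x i)
      have hsq : (2 * (γ * ⌊x i / γ⌋ : ℝ) + γ) ^ 2 ≤ (2 * |x i| + γ) ^ 2 :=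
        sq_le_sq' (by linarith) (by linarith)
      calc (c i) ^ 2 = γ ^ 2 * (2 * (γ * ⌊x i / γ⌋ : ℝ) + γ) ^ 2 := by rw [hc]; ring
        _ ≤ γ ^ 2 * (2 * |x i| + γ) ^ 2 := by nlinarith [sq_nonneg γ]
    have hcauchy : (∑ i, |x i|) ^ 2 ≤ (d : ℝ) * ∑ i, (x i) ^ 2 := by
      have := sq_sum_le_card_mul_sum_sq (s := (Finset.univ : Finset (Fin d)))
        (f := fun i => |x i|)
      simpa [sq_abs] using this
    have hsumx : 0 ≤ ∑ i, (x i) ^ 2 := Finset.sum_nonneg fun i _ => sq_nonneg _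
    have hsx : ∑ i, |x i| ≤ Real.sqrt d * nx := by
      have h7 : 0 ≤ ∑ i, |x i| := Finset.sum_nonneg fun i _ => abs_nonneg _
      rw [← Real.sqrt_sq h7]
      calc Real.sqrt ((∑ i, |x i|) ^ 2) ≤ Real.sqrt ((d : ℝ) * ∑ i, (x i) ^ 2) :=
            Real.sqrt_le_sqrt hcauchy
        _ = Real.sqrt d * nx := by rw [Real.sqrt_mul (Nat.cast_nonneg d), hnx]
    have hnxsq : nx ^ 2 = ∑ i, (x i) ^ 2 := Real.sq_sqrt hsumx
    have hd2 : Real.sqrt d ^ 2 = (d : ℝ) := Real.sq_sqrt (Nat.cast_nonneg d)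
    have hexp : ∑ i, (2 * |x i| + γ) ^ 2 =
        4 * (∑ i, (x i) ^ 2) + 4 * γ * (∑ i, |x i|) + d * γ ^ 2 := by
      have h8 : ∀ i, (2 * |x i| + γ) ^ 2 = 4 * (x i) ^ 2 + 4 * γ * |x i| + γ ^ 2 := fun i => by
        rw [← sq_abs (x i)]; ring
      rw [Finset.sum_congr rfl (fun i _ => h8 i), Finset.sum_add_distrib,
        Finset.sum_add_distrib, ← Finset.mul_sum, ← Finset.mul_sum, Finset.sum_const,
        Finset.card_univ, Fintype.card_fin, nsmul_eq_mul]
    have h9 : ∑ i, (2 * |x i| + γ) ^ 2 ≤ B ^ 2 := by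
      rw [hexp, hB]
      nlinarith [mul_le_mul_of_nonneg_left hsx (le_of_lt hγ)]
    calc ∑ i, (c i) ^ 2 ≤ ∑ i, γ ^ 2 * (2 * |x i| + γ) ^ 2 :=
          Finset.sum_le_sum fun i _ => h1 i
      _ = γ ^ 2 * ∑ i, (2 * |x i| + γ) ^ 2 := by rw [Finset.mul_sum]
      _ ≤ γ ^ 2 * B ^ 2 := by nlinarith [sq_nonneg γ]
  -- Chernoff bound
  have hchern := measure_ge_le_exp_mul_mgf (μ := μ) (X := ∑ i, X i) ε hlam0 hint_sum
  have hfinal : Real.exp (-lam * ε) * mgf (∑ i, X i) μ lam ≤ β := by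
    rw [hXindep.mgf_sum hXmeas]
    have h2L : Real.sqrt (2 * L) ^ 2 = 2 * L := Real.sq_sqrt (by positivity)
    have hγB : γ * B ≠ 0 := by positivity
    calc Real.exp (-lam * ε) * ∏ i, mgf (X i) μ lam
        ≤ Real.exp (-lam * ε) * ∏ i, Real.exp (lam * m i + lam ^ 2 * (c i) ^ 2 / 8) := by
          refine mul_le_mul_of_nonneg_left ?_ (Real.exp_pos _).le
          exact Finset.prod_le_prod (fun i _ => mgf_nonneg) (fun i _ => hmgf_i i)
      _ = Real.exp (-lam * ε + ∑ i, (lam * m i + lam ^ 2 * (c i) ^ 2 / 8)) := by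
          rw [← Real.exp_sum, ← Real.exp_add]
      _ ≤ Real.exp (-L) := by
          apply Real.exp_le_exp.2
          have hsum : ∑ i, (lam * m i + lam ^ 2 * (c i) ^ 2 / 8) =
              lam * (∑ i, m i) + lam ^ 2 * (∑ i, (c i) ^ 2) / 8 := by
            rw [Finset.sum_add_distrib, ← Finset.mul_sum, ← Finset.sum_div, ← Finset.mul_sum]
          rw [hsum, ← hES_eq, hε]
          have hkey : -lam * tstar + lam ^ 2 * (γ ^ 2 * B ^ 2) / 8 = -L := by
            have hhalf : nx + γ / 2 * Real.sqrt d = B / 2 := by rw [hB]; ring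
            obtain ⟨s, hs⟩ : ∃ s, Real.sqrt (2 * L) = s := ⟨_, rfl⟩
            have h2s : s ^ 2 = 2 * L := by rw [← hs]; exact Real.sq_sqrt (by positivity)
            rw [htstar, hhalf, hlam, hs]
            field_simp
            linear_combination (-4:ℝ) * h2s
          have hmono : lam ^ 2 * (∑ i, (c i) ^ 2) / 8 ≤ lam ^ 2 * (γ ^ 2 * B ^ 2) / 8 := by
            have h := mul_le_mul_of_nonneg_left hcsum (sq_nonneg lam)
            exact (div_le_div_iff_of_pos_right (by norm_num)).2 h
          nlinarith [hkey, hmono]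
      _ = β := by
          rw [hLdef, one_div, Real.log_inv, neg_neg, Real.exp_log hβ0]
  -- wrap up in ENNReal
  have hSmeas : Measurable fun ω => ∑ i, (R ω i) ^ 2 :=
    Finset.measurable_sum _ (fun i _ => (hmeas i).pow_const 2)
  have hTm : MeasurableSet {ω | ∑ i, (R ω i) ^ 2 ≤ ε} :=
    measurableSet_le hSmeas measurable_const
  have hsub : {ω | ∑ i, (R ω i) ^ 2 ≤ ε}ᶜ ⊆ {ω | ε ≤ (∑ i, X i) ω} := by
    intro ω hω
    simp only [Set.mem_compl_iff, Set.mem_setOf_eq, not_le] at hω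
    simp only [Set.mem_setOf_eq, Finset.sum_apply]
    exact le_of_lt hω
  have hcompl : μ {ω | ∑ i, (R ω i) ^ 2 ≤ ε}ᶜ ≤ ENNReal.ofReal β := by
    refine le_trans (measure_mono hsub) ?_
    rw [← ENNReal.ofReal_toReal (measure_ne_top μ _)]
    exact ENNReal.ofReal_le_ofReal (le_trans hchern hfinal)
  have htotal := measure_add_measure_compl (μ := μ) hTm
  have hgoal : ENNReal.ofReal (1 - β) ≤ μ {ω | ∑ i, (R ω i) ^ 2 ≤ ε} := by
    have h10 : ENNReal.ofReal (1 - β) = 1 - ENNReal.ofReal β := by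
      rw [ENNReal.ofReal_sub _ hβ0.le, ENNReal.ofReal_one]
    rw [h10, tsub_le_iff_right]
    calc (1 : ENNReal) = μ {ω | ∑ i, (R ω i) ^ 2 ≤ ε} + μ {ω | ∑ i, (R ω i) ^ 2 ≤ ε}ᶜ := by
          rw [htotal, measure_univ]
      _ ≤ μ {ω | ∑ i, (R ω i) ^ 2 ≤ ε} + ENNReal.ofReal β := add_le_add_right hcompl _
  exact hgoal
end

section
/- Let γ > 0, x ∈ ℝ^d, and β ∈ (0,1). For randomized rounding R_γ(x), P[‖R_γ(x)‖₁ ≤ ‖x‖₁ + γ·√((d/2)·log(1/β))] ≥ 1 − β. -/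
open MeasureTheory ProbabilityTheory

lemma two_point_mgf_le (p v : ℝ) (hp0 : 0 ≤ p) (hp1 : p ≤ 1) :
    (1 - p) * Real.exp (-p * v) + p * Real.exp ((1 - p) * v) ≤ Real.exp (v ^ 2 / 8) := by
  set D : ℝ → ℝ := fun w => 1 - p + p * Real.exp w with hDdef
  have hD : ∀ w, 0 < D w := by
    intro w
    rcases lt_or_eq_of_le hp1 with h | h
    · have := mul_nonneg hp0 (Real.exp_pos w).le
      simp only [hDdef]; linarith
    · subst h; simp only [hDdef]; simpa using Real.exp_pos w
  set g : ℝ → ℝ := fun w => p + w / 4 - p * Real.exp w / D w with hgdef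
  set f : ℝ → ℝ := fun w => p * w + w ^ 2 / 8 - Real.log (D w) with hfdef
  have hDd : ∀ w, HasDerivAt D (p * Real.exp w) w := by
    intro w
    exact ((Real.hasDerivAt_exp w).const_mul p).const_add (1 - p)
  have hf : ∀ w, HasDerivAt f (g w) w := by
    intro w
    have h1 : HasDerivAt (fun w => Real.log (D w)) (p * Real.exp w / D w) w :=
      (hDd w).log (hD w).ne'
    have h2 : HasDerivAt (fun w : ℝ => p * w + w ^ 2 / 8)
        (p + 2 * w / 8) w := by
      have := ((hasDerivAt_pow 2 w).div_const 8).const_add (p * w)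
      -- deriv of p*w is p
      have h3 : HasDerivAt (fun w : ℝ => p * w) p w := by
        simpa using (hasDerivAt_id w).const_mul p
      exact (h3.add ((hasDerivAt_pow 2 w).div_const 8)).congr_deriv (by norm_num)
    have := h2.sub h1
    refine this.congr_deriv ?_
    simp only [hgdef]; ring
  have hg : ∀ w, HasDerivAt g (1 / 4 - p * (1 - p) * Real.exp w / (D w) ^ 2) w := by
    intro w
    have hnum : HasDerivAt (fun w => p * Real.exp w) (p * Real.exp w) w :=
      (Real.hasDerivAt_exp w).const_mul p
    have hq : HasDerivAt (fun w => p * Real.exp w / D w)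
        ((p * Real.exp w * D w - p * Real.exp w * (p * Real.exp w)) / (D w) ^ 2) w :=
      hnum.div (hDd w) (hD w).ne'
    have hlin : HasDerivAt (fun w : ℝ => p + w / 4) (1 / 4) w := by
      simpa using ((hasDerivAt_id w).div_const 4).const_add p
    have := hlin.sub hq
    refine this.congr_deriv ?_
    have hDw := (hD w).ne'
    field_simp
    ring
  have hgmono : Monotone g :=
    monotone_of_deriv_nonneg (fun w => (hg w).differentiableAt)
      (fun w => by
        rw [(hg w).deriv]
        set A := p * Real.exp w / D w with hA
        set B := (1 - p) / D w with hB
        have hABsum : A + B = 1 := by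
          have h1 : A + B = (1 - p + p * Real.exp w) / D w := by
            rw [hA, hB, ← add_div]; ring_nf
          rw [h1, show 1 - p + p * Real.exp w = D w from rfl, div_self (hD w).ne']
        have hfrac : p * (1 - p) * Real.exp w / (D w) ^ 2 = A * B := by
          rw [hA, hB, div_mul_div_comm, sq]
          ring_nf
        rw [hfrac]
        nlinarith [sq_nonneg (A - B)])
  have hg0 : g 0 = 0 := by
    have : D 0 = 1 := by simp [hDdef]
    simp [hgdef, this]
  have hf0 : f 0 = 0 := by
    have : D 0 = 1 := by simp [hDdef]
    simp [hfdef, this]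
  have hfnn : ∀ w, 0 ≤ f w := by
    intro w
    have hcont : Continuous f := by
      rw [continuous_iff_continuousAt]
      exact fun w => (hf w).differentiableAt.continuousAt
    rcases le_total 0 w with hw | hw
    · have hmono : MonotoneOn f (Set.Icc 0 w) := by
        refine monotoneOn_of_deriv_nonneg (convex_Icc 0 w) hcont.continuousOn
          (fun y _ => (hf y).differentiableAt.differentiableWithinAt) (fun y hy => ?_)
        rw [interior_Icc] at hy
        rw [(hf y).deriv]
        have := hgmono hy.1.le
        linarith [hg0 ▸ this]
      have := hmono (Set.left_mem_Icc.mpr hw) (Set.right_mem_Icc.mpr hw) hw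
      linarith [hf0 ▸ this]
    · have hmono : AntitoneOn f (Set.Icc w 0) := by
        refine antitoneOn_of_deriv_nonpos (convex_Icc w 0) hcont.continuousOn
          (fun y _ => (hf y).differentiableAt.differentiableWithinAt) (fun y hy => ?_)
        rw [interior_Icc] at hy
        rw [(hf y).deriv]
        have := hgmono hy.2.le
        linarith [hg0 ▸ this]
      have := hmono (Set.left_mem_Icc.mpr hw) (Set.right_mem_Icc.mpr hw) hw
      linarith [hf0 ▸ this]
  have hlogD : Real.log (D v) ≤ p * v + v ^ 2 / 8 := by
    have := hfnn v
    simp only [hfdef] at this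
    linarith
  have hLHS : (1 - p) * Real.exp (-p * v) + p * Real.exp ((1 - p) * v)
      = Real.exp (-p * v) * D v := by
    rw [show (1 - p) * v = -p * v + v by ring, Real.exp_add]
    simp only [hDdef]
    ring
  rw [hLHS, ← Real.exp_log (hD v), ← Real.exp_add]
  exact Real.exp_le_exp.mpr (by linarith)

/-- High-probability bound on the ℓ₁ norm of randomized rounding:
`P[‖R(x)‖₁ ≤ ‖x‖₁ + γ·√((d/2)·log(1/β))] ≥ 1 − β`. -/
theorem randomized_rounding_l1_high_prob
    {Ω : Type*} [MeasurableSpace Ω] (μ : Measure Ω) [IsProbabilityMeasure μ]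
    (d : ℕ) (γ : ℝ) (hγ : 0 < γ) (β : ℝ) (hβ : β ∈ Set.Ioo (0 : ℝ) 1)
    (x : Fin d → ℝ) (R : Ω → Fin d → ℝ)
    (hmeas : ∀ i, Measurable fun ω => R ω i)
    (hval : ∀ i, ∀ᵐ ω ∂μ,
      R ω i = γ * ⌊x i / γ⌋ ∨ R ω i = γ * ⌊x i / γ⌋ + γ)
    (hprob : ∀ i, μ {ω | R ω i = γ * ⌊x i / γ⌋ + γ} =
      ENNReal.ofReal ((x i - γ * ⌊x i / γ⌋) / γ))
    (hindep : iIndepFun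
      (fun i ω => R ω i) μ) :
    ENNReal.ofReal (1 - β) ≤
      μ {ω | ∑ i, |R ω i| ≤
        ∑ i, |x i| + γ * Real.sqrt ((d : ℝ) / 2 * Real.log (1 / β))} := by
  obtain ⟨hβ0, hβ1⟩ := hβ
  rcases Nat.eq_zero_or_pos d with hd | hd
  · subst hd
    have hset : {ω : Ω | ∑ i : Fin 0, |R ω i| ≤
        ∑ i : Fin 0, |x i| + γ * Real.sqrt ((0:ℕ) / 2 * Real.log (1 / β))} = Set.univ := by
      ext ω
      simp only [Finset.univ_eq_empty, Finset.sum_empty, Set.mem_setOf_eq, Set.mem_univ, iff_true,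
        zero_add]
      positivity
    rw [hset, measure_univ]
    exact ENNReal.ofReal_le_one.mpr (by linarith)
  have hd0 : (0:ℝ) < d := Nat.cast_pos.mpr hd
  set a : Fin d → ℝ := fun i => γ * ⌊x i / γ⌋ with hadef
  set pr : Fin d → ℝ := fun i => (x i - a i) / γ with hprdef
  have hval' : ∀ i, ∀ᵐ ω ∂μ, R ω i = a i ∨ R ω i = a i + γ := hval
  have hprob' : ∀ i, μ {ω | R ω i = a i + γ} = ENNReal.ofReal (pr i) := hprob
  have hax : ∀ i, a i ≤ x i := by
    intro i
    have h1 := Int.floor_le (x i / γ)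
    calc a i ≤ γ * (x i / γ) := mul_le_mul_of_nonneg_left h1 hγ.le
    _ = x i := by rw [mul_comm, div_mul_cancel₀ _ hγ.ne']
  have hxa : ∀ i, x i < a i + γ := by
    intro i
    have h1 := Int.lt_floor_add_one (x i / γ)
    have h2 : γ * (x i / γ) < γ * (⌊x i / γ⌋ + 1) := by gcongr
    rw [mul_comm, div_mul_cancel₀ _ hγ.ne'] at h2
    show γ * (⌊x i / γ⌋:ℝ) + γ > x i
    push_cast at h2 ⊢
    linarith [h2]
  have hp0 : ∀ i, 0 ≤ pr i := fun i => div_nonneg (by linarith [hax i]) hγ.le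
  have hp1 : ∀ i, pr i ≤ 1 := by
    intro i
    rw [hprdef, div_le_one hγ]
    linarith [hxa i]
  have hprγ : ∀ i, pr i * γ = x i - a i := by
    intro i; rw [hprdef, div_mul_cancel₀ _ hγ.ne']
  set s : Fin d → ℝ := fun i => if 0 ≤ a i then 1 else -1 with hsdef
  have hs2 : ∀ i, s i ^ 2 = 1 := by
    intro i; by_cases h : 0 ≤ a i <;> simp [hsdef, h]
  set Y : Fin d → Ω → ℝ := fun i ω => s i * (R ω i - x i) with hYdef
  have habs : ∀ i, ∀ᵐ ω ∂μ, |R ω i| = |x i| + Y i ω := by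
    intro i
    filter_upwards [hval' i] with ω h
    by_cases hsi : 0 ≤ a i
    · have hs1 : s i = 1 := if_pos hsi
      have hR0 : 0 ≤ R ω i := by rcases h with h | h <;> rw [h] <;> [exact hsi; linarith]
      rw [abs_of_nonneg hR0, abs_of_nonneg (le_trans hsi (hax i))]
      show R ω i = x i + s i * (R ω i - x i)
      rw [hs1]; ring
    · push_neg at hsi
      have hs1 : s i = -1 := if_neg (not_le.mpr hsi)
      have hfl : (⌊x i / γ⌋ : ℝ) ≤ -1 := by
        have h0 : (⌊x i / γ⌋ : ℝ) < 0 := by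
          by_contra hc
          push_neg at hc
          exact absurd (mul_nonneg hγ.le hc) (not_le.mpr hsi)
        have h1 : ⌊x i / γ⌋ < 0 := by exact_mod_cast h0
        have h2 : ⌊x i / γ⌋ ≤ -1 := by omega
        exact_mod_cast h2
      have haγ : a i + γ ≤ 0 := by
        have h3 : a i ≤ γ * (-1) := mul_le_mul_of_nonneg_left hfl hγ.le
        linarith
      have hR0 : R ω i ≤ 0 := by rcases h with h | h <;> rw [h] <;> linarith
      rw [abs_of_nonpos hR0, abs_of_nonpos (by linarith [hxa i])]
      show -R ω i = -x i + s i * (R ω i - x i)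
      rw [hs1]; ring
  have hYmeas : ∀ i, Measurable (Y i) := fun i =>
    ((hmeas i).sub measurable_const).const_mul _
  have hYindep : iIndepFun Y μ := by
    have := hindep.comp (fun i y => s i * (y - x i))
      (fun i => (measurable_id.sub measurable_const).const_mul _)
    exact this
  set T : ℝ := γ * Real.sqrt ((d : ℝ) / 2 * Real.log (1 / β)) with hTdef
  have hlogβ : 0 < Real.log (1 / β) := Real.log_pos (by rw [lt_div_iff₀ hβ0]; linarith)
  have harg : 0 ≤ (d : ℝ) / 2 * Real.log (1 / β) := by positivity
  have hT0 : 0 ≤ T := by rw [hTdef]; positivity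
  set t : ℝ := 4 * T / (d * γ ^ 2) with htdef
  have ht0 : 0 ≤ t := by rw [htdef]; positivity
  -- per-coordinate mgf computation
  have hsetm : ∀ i, MeasurableSet {ω | R ω i = a i + γ} := fun i =>
    (hmeas i) (measurableSet_singleton _)
  have haeq : ∀ i, (fun ω => Real.exp (t * Y i ω)) =ᵐ[μ]
      fun ω => Real.exp (t * (s i * (a i - x i))) +
        Set.indicator {ω | R ω i = a i + γ}
          (fun _ => Real.exp (t * (s i * (a i + γ - x i))) -
            Real.exp (t * (s i * (a i - x i)))) ω := by
    intro i
    filter_upwards [hval' i] with ω h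
    rcases h with h | h
    · have hnot : ω ∉ {ω | R ω i = a i + γ} := by
        simp only [Set.mem_setOf_eq, h]
        intro hc
        exact hγ.ne' (by linarith)
      rw [Set.indicator_of_notMem hnot]
      show Real.exp (t * (s i * (R ω i - x i))) = _
      rw [h]
      ring_nf
    · have hmem : ω ∈ {ω | R ω i = a i + γ} := h
      rw [Set.indicator_of_mem hmem]
      show Real.exp (t * (s i * (R ω i - x i))) = _
      rw [h]
      ring_nf
  have hintR : ∀ i, Integrable (fun ω => Real.exp (t * (s i * (a i - x i))) +
      Set.indicator {ω | R ω i = a i + γ}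
        (fun _ => Real.exp (t * (s i * (a i + γ - x i))) -
          Real.exp (t * (s i * (a i - x i)))) ω) μ :=
    fun i => (integrable_const _).add ((integrable_const _).indicator (hsetm i))
  have hint : ∀ i, Integrable (fun ω => Real.exp (t * Y i ω)) μ := fun i =>
    (hintR i).congr (haeq i).symm
  have hmgfY : ∀ i, mgf (Y i) μ t ≤ Real.exp (t ^ 2 * γ ^ 2 / 8) := by
    intro i
    set v : ℝ := t * s i * γ with hvdef
    have hc0 : t * (s i * (a i - x i)) = -pr i * v := by
      rw [hvdef, show a i - x i = -(pr i * γ) by linarith [hprγ i]]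
      ring
    have hc1 : t * (s i * (a i + γ - x i)) = (1 - pr i) * v := by
      rw [hvdef, show a i + γ - x i = (1 - pr i) * γ by linarith [hprγ i]]
      ring
    have hcalc : mgf (Y i) μ t = (1 - pr i) * Real.exp (-pr i * v) +
        pr i * Real.exp ((1 - pr i) * v) := by
      rw [mgf, integral_congr_ae (haeq i), integral_add (integrable_const _)
        ((integrable_const _).indicator (hsetm i)), integral_const,
        integral_indicator_const _ (hsetm i), measureReal_def, measureReal_def, hprob' i]
      simp only [measure_univ, ENNReal.toReal_one, one_smul, smul_eq_mul]
      rw [ENNReal.toReal_ofReal (hp0 i), hc0, hc1]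
      ring
    rw [hcalc]
    have hv2 : v ^ 2 = t ^ 2 * γ ^ 2 := by
      rw [hvdef, mul_pow, mul_pow, hs2 i]
      ring
    calc (1 - pr i) * Real.exp (-pr i * v) + pr i * Real.exp ((1 - pr i) * v)
        ≤ Real.exp (v ^ 2 / 8) := two_point_mgf_le (pr i) v (hp0 i) (hp1 i)
      _ = Real.exp (t ^ 2 * γ ^ 2 / 8) := by rw [hv2]
  -- Chernoff
  have hintsum : Integrable (fun ω => Real.exp (t * (∑ i, Y i) ω)) μ :=
    hYindep.integrable_exp_mul_sum hYmeas (fun i _ => hint i)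
  have hmgfsum : mgf (∑ i, Y i) μ t ≤ Real.exp ((d : ℝ) * (t ^ 2 * γ ^ 2 / 8)) := by
    rw [hYindep.mgf_sum hYmeas]
    calc ∏ i, mgf (Y i) μ t ≤ ∏ _i : Fin d, Real.exp (t ^ 2 * γ ^ 2 / 8) :=
          Finset.prod_le_prod (fun i _ => mgf_nonneg) (fun i _ => hmgfY i)
      _ = Real.exp ((d : ℝ) * (t ^ 2 * γ ^ 2 / 8)) := by
          rw [Finset.prod_const, ← Real.exp_nat_mul]
          simp
  have hchernoff : (μ {ω | T ≤ (∑ i, Y i) ω}).toReal ≤ β := by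
    calc (μ {ω | T ≤ (∑ i, Y i) ω}).toReal
        ≤ Real.exp (-t * T) * mgf (∑ i, Y i) μ t :=
          measure_ge_le_exp_mul_mgf T ht0 hintsum
      _ ≤ Real.exp (-t * T) * Real.exp ((d : ℝ) * (t ^ 2 * γ ^ 2 / 8)) :=
          mul_le_mul_of_nonneg_left hmgfsum (Real.exp_pos _).le
      _ = Real.exp (-t * T + (d : ℝ) * (t ^ 2 * γ ^ 2 / 8)) := (Real.exp_add _ _).symm
      _ = β := by
          have hT2 : T ^ 2 = γ ^ 2 * ((d : ℝ) / 2 * Real.log (1 / β)) := by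
            rw [hTdef, mul_pow, Real.sq_sqrt harg]
          have hdγ : ((d:ℝ) * γ ^ 2) ≠ 0 := by positivity
          have key : -t * T + (d : ℝ) * (t ^ 2 * γ ^ 2 / 8)
              = -(2 * T ^ 2 / ((d:ℝ) * γ ^ 2)) := by
            rw [htdef]
            field_simp
            ring
          have key2 : 2 * T ^ 2 / ((d:ℝ) * γ ^ 2) = Real.log (1 / β) := by
            rw [hT2]
            field_simp
          rw [key, key2, one_div, Real.log_inv, neg_neg, Real.exp_log hβ0]
  -- event manipulation
  have hall : ∀ᵐ ω ∂μ, ∑ i, |R ω i| = ∑ i, |x i| + ∑ i, Y i ω := by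
    have h1 : ∀ᵐ ω ∂μ, ∀ i, |R ω i| = |x i| + Y i ω := ae_all_iff.mpr habs
    filter_upwards [h1] with ω h
    rw [Finset.sum_congr rfl (fun i _ => h i), Finset.sum_add_distrib]
  set B : Set Ω := {ω | ∑ i, Y i ω ≤ T} with hBdef
  have hBm : MeasurableSet B :=
    measurableSet_le (Finset.measurable_sum _ (fun i _ => hYmeas i)) measurable_const
  have hAB : {ω | ∑ i, |R ω i| ≤ ∑ i, |x i| + T} =ᵐ[μ] B := by
    rw [Filter.eventuallyEq_set]
    filter_upwards [hall] with ω h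
    simp only [Set.mem_setOf_eq, hBdef, h]
    constructor <;> intro <;> linarith
  rw [measure_congr hAB]
  have hcompl : μ Bᶜ ≤ ENNReal.ofReal β := by
    have hsub : Bᶜ ⊆ {ω | T ≤ (∑ i, Y i) ω} := by
      intro ω hω
      simp only [hBdef, Set.mem_compl_iff, Set.mem_setOf_eq, not_le] at hω
      simp only [Set.mem_setOf_eq, Finset.sum_apply]
      exact hω.le
    calc μ Bᶜ ≤ μ {ω | T ≤ (∑ i, Y i) ω} := measure_mono hsub
      _ ≤ ENNReal.ofReal β := by
          rw [← ENNReal.ofReal_toReal (measure_ne_top μ _)]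
          exact ENNReal.ofReal_le_ofReal hchernoff
  have h1 : ENNReal.ofReal (1 - β) = 1 - ENNReal.ofReal β := by
    rw [ENNReal.ofReal_sub _ hβ0.le, ENNReal.ofReal_one]
  rw [h1, tsub_le_iff_right]
  have hsum : μ B + μ Bᶜ = 1 := by
    rw [measure_add_measure_compl hBm, measure_univ]
  calc (1 : ENNReal) = μ B + μ Bᶜ := hsum.symm
    _ ≤ μ B + ENNReal.ofReal β := add_le_add_right hcompl _
end

section
/- Let x ∈ ℝ^d be fixed and let U be a uniformly random rotation (or unitary) matrix, so that Ux is uniform on the sphere of radius ‖x‖₂. Then for every coordinate i and every t ∈ ℝ, E[exp(t·(Ux)_i)] ≤ exp(t²‖x‖₂²/(2d)). -/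
open MeasureTheory

open scoped RealInnerProductSpace

/-- Coordinates of a uniformly random point on a sphere are subgaussian:
if `Y` is a random vector whose distribution is uniform on the sphere of radius `‖x‖₂`
(formalized as: `‖Y‖ = ‖x‖` almost surely and the law of `Y` is invariant under every
linear isometry of `ℝ^d`, as is the case for `Y = Ux` with `U` a uniformly random
rotation/unitary matrix), then for every coordinate `i` and every `t ∈ ℝ`,
`E[exp(t·Y_i)] ≤ exp(t²‖x‖₂²/(2d))`. -/
theorem random_rotation_coordinate_subgaussian
    {Ω : Type*} [MeasurableSpace Ω] (μ : Measure Ω) [IsProbabilityMeasure μ]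
    (d : ℕ) (x : EuclideanSpace ℝ (Fin d)) (Y : Ω → EuclideanSpace ℝ (Fin d))
    (hmeas : Measurable Y)
    (hnorm : ∀ᵐ ω ∂μ, ‖Y ω‖ = ‖x‖)
    (hinv : ∀ U : EuclideanSpace ℝ (Fin d) ≃ₗᵢ[ℝ] EuclideanSpace ℝ (Fin d),
      Measure.map (fun ω => U (Y ω)) μ = Measure.map Y μ)
    (i : Fin d) (t : ℝ) :
    ∫ ω, Real.exp (t * Y ω i) ∂μ ≤ Real.exp (t ^ 2 * ‖x‖ ^ 2 / (2 * d)) := by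
  classical
  have hd0 : 0 < d := i.pos
  have hdR : (0:ℝ) < d := by exact_mod_cast hd0
  have hsd : Real.sqrt d ≠ 0 := by positivity
  -- the sign vectors
  set u : (Fin d → Bool) → EuclideanSpace ℝ (Fin d) :=
    fun ε => WithLp.toLp 2 (fun j => (if ε j then (1:ℝ) else -1) / Real.sqrt d) with hu_def
  have hucoord : ∀ ε j, u ε j = (if ε j then (1:ℝ) else -1) / Real.sqrt d := fun ε j => rfl
  have husq : ∀ ε j, (u ε j) ^ 2 = 1 / d := by
    intro ε j
    rw [hucoord, div_pow, Real.sq_sqrt hdR.le]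
    split <;> norm_num
  have hunorm : ∀ ε, ‖u ε‖ = 1 := by
    intro ε
    rw [EuclideanSpace.norm_eq]
    have : ∀ j, ‖u ε j‖ ^ 2 = 1 / d := by
      intro j; rw [Real.norm_eq_abs, sq_abs, husq]
    rw [Finset.sum_congr rfl fun j _ => this j, Finset.sum_const, Finset.card_univ,
      Fintype.card_fin, nsmul_eq_mul, mul_one_div, div_self (ne_of_gt hdR), Real.sqrt_one]
  set e : EuclideanSpace ℝ (Fin d) := EuclideanSpace.single i (1:ℝ) with he_def
  have henorm : ‖e‖ = 1 := by simp [he_def]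
  -- measurability facts
  have hproj : Continuous fun z : EuclideanSpace ℝ (Fin d) => z i :=
    (continuous_apply i).comp (PiLp.continuous_ofLp 2 _)
  have hg : Measurable fun z : EuclideanSpace ℝ (Fin d) => Real.exp (t * z i) :=
    (Real.continuous_exp.comp (continuous_const.mul hproj)).measurable
  have hinner : ∀ ε, Measurable fun ω => ⟪Y ω, u ε⟫ := by
    intro ε
    exact ((continuous_id.inner (continuous_const : Continuous fun _ :
      EuclideanSpace ℝ (Fin d) => u ε)).measurable).comp hmeas
  -- step 1: rotation invariance
  have h1 : ∀ ε, ∫ ω, Real.exp (t * Y ω i) ∂μ = ∫ ω, Real.exp (t * ⟪Y ω, u ε⟫) ∂μ := by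
    intro ε
    set V := Submodule.reflection (ℝ ∙ (e - u ε))ᗮ with hV_def
    have hVe : V e = u ε := Submodule.reflection_sub (by rw [henorm, hunorm])
    have hVu : V (u ε) = e := by rw [← hVe]; exact Submodule.reflection_reflection _ _
    have hkey : ∀ y : EuclideanSpace ℝ (Fin d), (V y) i = ⟪y, u ε⟫ := by
      intro y
      have h1 : (V y) i = ⟪V y, e⟫ := by
        rw [he_def, EuclideanSpace.inner_single_right]; simp
      rw [h1, ← hVu, LinearIsometryEquiv.inner_map_map]
    have hVm : Measurable fun ω => V (Y ω) := V.continuous.measurable.comp hmeas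
    calc ∫ ω, Real.exp (t * Y ω i) ∂μ
        = ∫ z, Real.exp (t * z i) ∂(Measure.map Y μ) :=
          (integral_map hmeas.aemeasurable hg.aestronglyMeasurable).symm
      _ = ∫ z, Real.exp (t * z i) ∂(Measure.map (fun ω => V (Y ω)) μ) := by rw [hinv V]
      _ = ∫ ω, Real.exp (t * (V (Y ω)) i) ∂μ :=
          integral_map hVm.aemeasurable hg.aestronglyMeasurable
      _ = ∫ ω, Real.exp (t * ⟪Y ω, u ε⟫) ∂μ := by simp_rw [hkey]
  -- integrability
  have hint : ∀ ε, Integrable (fun ω => Real.exp (t * ⟪Y ω, u ε⟫)) μ := by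
    intro ε
    refine Integrable.mono' (integrable_const (Real.exp (|t| * ‖x‖)))
      ((Real.measurable_exp.comp ((hinner ε).const_mul t)).aestronglyMeasurable) ?_
    filter_upwards [hnorm] with ω hω
    rw [Real.norm_eq_abs, Real.abs_exp]
    apply Real.exp_le_exp.2
    calc t * ⟪Y ω, u ε⟫ ≤ |t * ⟪Y ω, u ε⟫| := le_abs_self _
      _ = |t| * |⟪Y ω, u ε⟫| := abs_mul _ _
      _ ≤ |t| * (‖Y ω‖ * ‖u ε‖) :=
          mul_le_mul_of_nonneg_left (abs_real_inner_le_norm _ _) (abs_nonneg t)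
      _ = |t| * ‖x‖ := by rw [hω, hunorm, mul_one]
  -- step 2: average over sign vectors
  have hcard : (Fintype.card (Fin d → Bool) : ℝ) = 2 ^ d := by
    simp [Fintype.card_fun]
  have h2 : ∫ ω, Real.exp (t * Y ω i) ∂μ
      = ∫ ω, ((2:ℝ) ^ d)⁻¹ * ∑ ε : Fin d → Bool, Real.exp (t * ⟪Y ω, u ε⟫) ∂μ := by
    rw [integral_const_mul, integral_finset_sum _ (fun ε _ => hint ε)]
    rw [Finset.sum_congr rfl fun ε _ => (h1 ε).symm, Finset.sum_const, Finset.card_univ,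
      nsmul_eq_mul, hcard, ← mul_assoc, inv_mul_cancel₀ (by positivity), one_mul]
  rw [h2]
  -- pointwise bound a.e.
  have hbound : ∀ᵐ ω ∂μ, ((2:ℝ) ^ d)⁻¹ * ∑ ε : Fin d → Bool, Real.exp (t * ⟪Y ω, u ε⟫)
      ≤ Real.exp (t ^ 2 * ‖x‖ ^ 2 / (2 * d)) := by
    filter_upwards [hnorm] with ω hω
    set y := Y ω with hy
    set a : Fin d → ℝ := fun j => t * y j / Real.sqrt d with ha_def
    have hin : ∀ ε, t * ⟪y, u ε⟫ = ∑ j, (if ε j then a j else -a j) := by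
      intro ε
      rw [PiLp.inner_apply, Finset.mul_sum]
      refine Finset.sum_congr rfl fun j _ => ?_
      simp only [RCLike.inner_apply, conj_trivial, hucoord, ha_def]
      split <;> ring
    have hsum2 : ∑ j, (a j) ^ 2 = t ^ 2 * ‖x‖ ^ 2 / d := by
      have hy2 : ∑ j, (y j) ^ 2 = ‖x‖ ^ 2 := by
        rw [← hω, EuclideanSpace.norm_eq, Real.sq_sqrt (by positivity)]
        exact Finset.sum_congr rfl fun j _ => by rw [Real.norm_eq_abs, sq_abs]
      calc ∑ j, (a j) ^ 2 = ∑ j, t ^ 2 / d * (y j) ^ 2 := by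
            refine Finset.sum_congr rfl fun j _ => ?_
            rw [ha_def]
            rw [div_pow, mul_pow, Real.sq_sqrt hdR.le]
            ring
        _ = t ^ 2 / d * ∑ j, (y j) ^ 2 := by rw [← Finset.mul_sum]
        _ = t ^ 2 * ‖x‖ ^ 2 / d := by rw [hy2]; ring
    calc ((2:ℝ) ^ d)⁻¹ * ∑ ε : Fin d → Bool, Real.exp (t * ⟪y, u ε⟫)
        = ((2:ℝ) ^ d)⁻¹ * ∑ ε : Fin d → Bool, ∏ j,
            Real.exp (if ε j then a j else -a j) := by
          refine congrArg _ (Finset.sum_congr rfl fun ε _ => ?_)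
          rw [hin ε, Real.exp_sum]
      _ = ((2:ℝ) ^ d)⁻¹ * ∏ j, (Real.exp (a j) + Real.exp (-a j)) := by
          rw [← Fintype.prod_sum fun j (b : Bool) => Real.exp (if b then a j else -a j)]
          congr 1
          exact Finset.prod_congr rfl fun j _ => by rw [Fintype.sum_bool]; simp
      _ = ∏ j, Real.cosh (a j) := by
          have : ∀ j : Fin d, Real.exp (a j) + Real.exp (-a j) = 2 * Real.cosh (a j) := by
            intro j; rw [Real.cosh_eq]; ring
          rw [Finset.prod_congr rfl fun j _ => this j, Finset.prod_mul_distrib,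
            Finset.prod_const, Finset.card_univ, Fintype.card_fin, ← mul_assoc,
            inv_mul_cancel₀ (by positivity), one_mul]
      _ ≤ ∏ j, Real.exp ((a j) ^ 2 / 2) :=
          Finset.prod_le_prod (fun j _ => (Real.cosh_pos _).le)
            (fun j _ => Real.cosh_le_exp_half_sq _)
      _ = Real.exp (∑ j, (a j) ^ 2 / 2) := (Real.exp_sum _ _).symm
      _ = Real.exp (t ^ 2 * ‖x‖ ^ 2 / (2 * d)) := by
          rw [← Finset.sum_div, hsum2]; ring_nf
  have hgint : Integrable (fun ω => ((2:ℝ) ^ d)⁻¹ *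
      ∑ ε : Fin d → Bool, Real.exp (t * ⟪Y ω, u ε⟫)) μ :=
    ((integrable_finset_sum _ (fun ε _ => hint ε)).const_mul _)
  calc ∫ ω, ((2:ℝ) ^ d)⁻¹ * ∑ ε : Fin d → Bool, Real.exp (t * ⟪Y ω, u ε⟫) ∂μ
      ≤ ∫ _ω, Real.exp (t ^ 2 * ‖x‖ ^ 2 / (2 * d)) ∂μ :=
        integral_mono_ae hgint (integrable_const _) hbound
    _ = Real.exp (t ^ 2 * ‖x‖ ^ 2 / (2 * d)) := by simp
end
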